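/- arXiv:1205.1586 — 7 statements merged into one kernel-verified Lean document; each statement's English description precedes it below -/
import Mathlib

section
/- If a polynomial p ∈ ℚ[x,y] satisfies p ∘ γ = p for every γ ∈ SL₂(ℤ), then p ∘ g = p for every g ∈ SL₂(ℚ). (Zariski density of SL₂(ℤ) in SL₂: invariance under the integral points implies invariance under all rational points.) -/
/-- The entries of an element of `SL₂(ℤ)`, mapped into `ℚ`. -/
noncomputable def matQ (γ : Matrix.SpecialLinearGroup (Fin 2) ℤ) :
    Matrix (Fin 2) (Fin 2) ℚ :=
  (γ : Matrix (Fin 2) (Fin 2) ℤ).map (Int.cast : ℤ → ℚ)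

/-- `p ∘ g` : the polynomial obtained from `p ∈ ℚ[x,y]` by the substitution
`x ↦ g₀₀·x + g₀₁·y`, `y ↦ g₁₀·x + g₁₁·y`. -/
noncomputable def polyComp (p : MvPolynomial (Fin 2) ℚ) (g : Matrix (Fin 2) (Fin 2) ℚ) :
    MvPolynomial (Fin 2) ℚ :=
  MvPolynomial.aeval
    (fun i => MvPolynomial.C (g i 0) * MvPolynomial.X 0
      + MvPolynomial.C (g i 1) * MvPolynomial.X 1) p

open MvPolynomial

lemma key_eval (t : ℚ) (q : MvPolynomial (Fin 3) ℚ) :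
    MvPolynomial.aeval (Fin.cases (MvPolynomial.C t) MvPolynomial.X) q
      = Polynomial.eval (MvPolynomial.C t) (MvPolynomial.finSuccEquiv ℚ 2 q) := by
  induction q using MvPolynomial.induction_on with
  | C a => simp [finSuccEquiv_apply]
  | add f g hf hg =>
      rw [map_add, map_add, Polynomial.eval_add, hf, hg]
  | mul_X f i hf =>
      rw [map_mul, map_mul, Polynomial.eval_mul, hf]
      congr 1
      rcases Fin.eq_zero_or_eq_succ i with rfl | ⟨j, rfl⟩
      · simp [finSuccEquiv_X_zero]
      · simp [finSuccEquiv_X_succ]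

lemma density (q : MvPolynomial (Fin 3) ℚ)
    (h : ∀ n : ℤ, MvPolynomial.aeval (Fin.cases (MvPolynomial.C (n : ℚ)) MvPolynomial.X) q = 0) :
    ∀ t : ℚ, MvPolynomial.aeval (Fin.cases (MvPolynomial.C t) MvPolynomial.X) q = 0 := by
  have hQ : MvPolynomial.finSuccEquiv ℚ 2 q = 0 := by
    apply Polynomial.eq_zero_of_infinite_isRoot
    apply Set.infinite_of_injective_forall_mem
      (f := fun n : ℤ => (MvPolynomial.C (n : ℚ) : MvPolynomial (Fin 2) ℚ))
    · intro a b hab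
      exact_mod_cast MvPolynomial.C_injective _ ℚ hab
    · intro n
      simp only [Set.mem_setOf_eq, Polynomial.IsRoot]
      rw [← key_eval, h n]
  have hq : q = 0 := (MvPolynomial.finSuccEquiv ℚ 2).injective (by rw [hQ, map_zero])
  intro t
  simp [hq]

lemma polyComp_mul (p : MvPolynomial (Fin 2) ℚ) (g h : Matrix (Fin 2) (Fin 2) ℚ) :
    polyComp p (g * h) = polyComp (polyComp p g) h := by
  unfold polyComp
  rw [comp_aeval_apply]
  refine congrArg (fun f => MvPolynomial.aeval f p) ?_
  funext i
  simp only [map_add, map_mul, aeval_C, aeval_X, Matrix.mul_apply, Fin.sum_univ_two,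
    algebraMap_eq, map_mul]
  push_cast [map_add, map_mul]
  ring


lemma cases0 (t : ℚ) :
    (Fin.cases (MvPolynomial.C t) MvPolynomial.X (0:Fin 3) : MvPolynomial (Fin 2) ℚ)
      = MvPolynomial.C t := rfl
lemma cases1 (t : ℚ) :
    (Fin.cases (MvPolynomial.C t) MvPolynomial.X (1:Fin 3) : MvPolynomial (Fin 2) ℚ)
      = MvPolynomial.X 0 := rfl
lemma cases2 (t : ℚ) :
    (Fin.cases (MvPolynomial.C t) MvPolynomial.X (2:Fin 3) : MvPolynomial (Fin 2) ℚ)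
      = MvPolynomial.X 1 := rfl

/-- upper transvection -/
def UM (t : ℚ) : Matrix (Fin 2) (Fin 2) ℚ := !![1, t; 0, 1]
/-- lower transvection -/
def LM (t : ℚ) : Matrix (Fin 2) (Fin 2) ℚ := !![1, 0; t, 1]

lemma polyComp_UM (p : MvPolynomial (Fin 2) ℚ) (t : ℚ) :
    polyComp p (UM t) =
      MvPolynomial.aeval (Fin.cases (MvPolynomial.C t) MvPolynomial.X)
        (MvPolynomial.aeval
          (fun i : Fin 2 => if i = 0 then (X 1 + X 0 * X 2 : MvPolynomial (Fin 3) ℚ) else X 2) p) := by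
  rw [comp_aeval_apply]
  unfold polyComp UM
  refine (congrArg (fun f => MvPolynomial.aeval f p) ?_).symm
  funext i
  fin_cases i <;> simp [cases0, cases1, cases2] <;> ring

lemma polyComp_LM (p : MvPolynomial (Fin 2) ℚ) (t : ℚ) :
    polyComp p (LM t) =
      MvPolynomial.aeval (Fin.cases (MvPolynomial.C t) MvPolynomial.X)
        (MvPolynomial.aeval
          (fun i : Fin 2 => if i = 0 then (X 1 : MvPolynomial (Fin 3) ℚ) else X 0 * X 1 + X 2) p) := by
  rw [comp_aeval_apply]
  unfold polyComp LM
  refine (congrArg (fun f => MvPolynomial.aeval f p) ?_).symm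
  funext i
  fin_cases i <;> simp [cases0, cases1, cases2] <;> ring

lemma aeval_cases_rename (t : ℚ) (p : MvPolynomial (Fin 2) ℚ) :
    MvPolynomial.aeval (Fin.cases (MvPolynomial.C t) MvPolynomial.X)
      (MvPolynomial.rename Fin.succ p) = p := by
  rw [aeval_rename]
  have : (Fin.cases (MvPolynomial.C t) MvPolynomial.X ∘ Fin.succ :
      Fin 2 → MvPolynomial (Fin 2) ℚ) = MvPolynomial.X := by
    funext j; simp
  rw [this, aeval_X_left_apply]

lemma UM_int (n : ℤ) : UM (n : ℚ) = matQ ⟨!![1, n; 0, 1], by simp [Matrix.det_fin_two_of]⟩ := by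
  ext i j
  fin_cases i <;> fin_cases j <;> simp [UM, matQ]

lemma LM_int (n : ℤ) : LM (n : ℚ) = matQ ⟨!![1, 0; n, 1], by simp [Matrix.det_fin_two_of]⟩ := by
  ext i j
  fin_cases i <;> fin_cases j <;> simp [LM, matQ]

/-- Zariski density of `SL₂(ℤ)` in `SL₂`: a polynomial `p ∈ ℚ[x,y]` invariant under the
substitution action of `SL₂(ℤ)` is invariant under all of `SL₂(ℚ)`. -/
theorem SL2Z_invariant_implies_SL2Q_invariant
    (p : MvPolynomial (Fin 2) ℚ)
    (hinv : ∀ γ : Matrix.SpecialLinearGroup (Fin 2) ℤ, polyComp p (matQ γ) = p) :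
    ∀ g : Matrix.SpecialLinearGroup (Fin 2) ℚ,
      polyComp p (g : Matrix (Fin 2) (Fin 2) ℚ) = p := by
  -- invariance under all rational upper transvections
  have hU : ∀ t : ℚ, polyComp p (UM t) = p := by
    intro t
    have hq := density
      (MvPolynomial.aeval
        (fun i : Fin 2 => if i = 0 then (X 1 + X 0 * X 2 : MvPolynomial (Fin 3) ℚ) else X 2) p
        - MvPolynomial.rename Fin.succ p)
      (fun n => by
        rw [map_sub, ← polyComp_UM, aeval_cases_rename, UM_int]; exact sub_eq_zero.mpr (hinv _)) t
    rw [map_sub, ← polyComp_UM, aeval_cases_rename, sub_eq_zero] at hq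
    exact hq
  have hL : ∀ t : ℚ, polyComp p (LM t) = p := by
    intro t
    have hq := density
      (MvPolynomial.aeval
        (fun i : Fin 2 => if i = 0 then (X 1 : MvPolynomial (Fin 3) ℚ) else X 0 * X 1 + X 2) p
        - MvPolynomial.rename Fin.succ p)
      (fun n => by
        rw [map_sub, ← polyComp_LM, aeval_cases_rename, LM_int]; exact sub_eq_zero.mpr (hinv _)) t
    rw [map_sub, ← polyComp_LM, aeval_cases_rename, sub_eq_zero] at hq
    exact hq
  -- invariance under any matrix of determinant 1 with nonzero lower-left entry
  have case1 : ∀ M : Matrix (Fin 2) (Fin 2) ℚ, M.det = 1 → M 1 0 ≠ 0 → polyComp p M = p := by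
    intro M hdet hc
    rw [Matrix.det_fin_two] at hdet
    have hM : M = UM ((M 0 0 - 1) / (M 1 0)) * (LM (M 1 0) * UM ((M 1 1 - 1) / (M 1 0))) := by
      ext i j
      fin_cases i <;> fin_cases j <;>
                simp [UM, LM, Matrix.mul_apply, Fin.sum_univ_two] <;>
        field_simp <;>
        (first
          | linear_combination hdet
          | linear_combination -hdet
          | linear_combination (2:ℚ) * hdet
          | linear_combination (-2:ℚ) * hdet
          | ring)
    rw [hM, polyComp_mul, hU, polyComp_mul, hL, hU]
  intro g
  set M : Matrix (Fin 2) (Fin 2) ℚ := (g : Matrix (Fin 2) (Fin 2) ℚ) with hMdef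
  have hdet : M.det = 1 := g.2
  by_cases hc : M 1 0 ≠ 0
  · exact case1 M hdet hc
  · push_neg at hc
    set S : Matrix (Fin 2) (Fin 2) ℚ := !![0, -1; 1, 0] with hS
    set S' : Matrix (Fin 2) (Fin 2) ℚ := !![0, 1; -1, 0] with hS'
    have hSS' : S * S' = 1 := by
      ext i j
      fin_cases i <;> fin_cases j <;> simp [hS, hS', Matrix.mul_apply, Fin.sum_univ_two]
    have hMS : M = (M * S) * S' := by rw [Matrix.mul_assoc, hSS', Matrix.mul_one]
    have hS'inv : polyComp p S' = p := by
      have : S' = matQ ⟨!![0, 1; -1, 0], by simp [Matrix.det_fin_two_of]⟩ := by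
        ext i j
        fin_cases i <;> fin_cases j <;> simp [hS', matQ]
      rw [this]; exact hinv _
    have h10 : (M * S) 1 0 = M 1 1 := by
      simp [hS, Matrix.mul_apply, Fin.sum_univ_two]
    have hdet2 : (M * S).det = 1 := by
      rw [Matrix.det_mul, hdet]
      simp [hS, Matrix.det_fin_two_of]
    have hM11 : M 1 1 ≠ 0 := by
      intro h
      rw [Matrix.det_fin_two, h, hc] at hdet
      simp at hdet
    rw [hMS, polyComp_mul, case1 (M * S) hdet2 (by rw [h10]; exact hM11), hS'inv]
end

section
/- Let a, b : ℕ and let f : Forms_a → Forms_b be a ℚ-linear map that is equivariant for the substitution actions of SL₂(ℤ), i.e. f(γ • p) = γ • f(p) for all γ ∈ SL₂(ℤ) and all p ∈ Forms_a. If a ≠ b then f = 0, and if a = b then f is a scalar multiple of the identity. (This encodes that Sym^a ⊗ Sym^b of the standard SL₂(ℤ)-representation has invariants of dimension 1 if a = b and 0 otherwise, which is how representations of SL₂ multiply.) -/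
set_option maxRecDepth 8000


/-- `Forms_d`: the space of homogeneous polynomials of degree `d` in `ℚ[x,y]`,
realizing `Sym^d` of the standard representation of `SL₂(ℤ)`. -/
noncomputable abbrev Forms (d : ℕ) : Submodule ℚ (MvPolynomial (Fin 2) ℚ) :=
  MvPolynomial.homogeneousSubmodule (Fin 2) ℚ d

namespace Equiv53

open MvPolynomial Finset

noncomputable section

abbrev V := MvPolynomial (Fin 2) ℚ

/-- exponent finsupp (i, j) -/
def ex (i j : ℕ) : Fin 2 →₀ ℕ := Finsupp.single 0 i + Finsupp.single 1 j

/-- the monomial x^i y^j -/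
def mon (i j : ℕ) : V := MvPolynomial.monomial (ex i j) 1

lemma ex_apply0 (i j : ℕ) : ex i j 0 = i := by
  simp [ex, Finsupp.single_apply]

lemma ex_apply1 (i j : ℕ) : ex i j 1 = j := by
  simp [ex, Finsupp.single_apply]

lemma ex_eq_self (m : Fin 2 →₀ ℕ) : ex (m 0) (m 1) = m := by
  ext t
  fin_cases t
  · exact ex_apply0 _ _
  · exact ex_apply1 _ _

lemma ex_inj {i j i' j' : ℕ} (h : ex i j = ex i' j') : i = i' ∧ j = j' := by
  constructor
  · rw [← ex_apply0 i j, h, ex_apply0]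
  · rw [← ex_apply1 i j, h, ex_apply1]

lemma degree_eq (m : Fin 2 →₀ ℕ) : m.degree = m 0 + m 1 := by
  rw [Finsupp.degree_apply, Finset.sum_subset (Finset.subset_univ m.support)
    (by intro x _ hx; simpa using Finsupp.notMem_support_iff.mp hx)]
  exact Fin.sum_univ_two m

lemma degree_ex (i j : ℕ) : (ex i j).degree = i + j := by
  rw [degree_eq, ex_apply0, ex_apply1]

lemma mon_eq (i j : ℕ) : mon i j = X 0 ^ i * X 1 ^ j := by
  rw [X_pow_eq_monomial, X_pow_eq_monomial, monomial_mul, one_mul, mon, ex]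

lemma mon_mem (i j : ℕ) : mon i j ∈ Forms (i + j) := by
  rw [mem_homogeneousSubmodule]
  exact isHomogeneous_monomial _ (degree_ex i j)

lemma coeff_mon (m : Fin 2 →₀ ℕ) (i j : ℕ) :
    coeff m (mon i j) = if ex i j = m then 1 else 0 := coeff_monomial m _ 1

/-- representation of homogeneous polynomials -/
lemma rep {d : ℕ} {p : V} (hp : p ∈ Forms d) :
    p = ∑ i ∈ range (d + 1), coeff (ex i (d - i)) p • mon i (d - i) := by
  rw [mem_homogeneousSubmodule] at hp
  apply MvPolynomial.ext
  intro m
  rw [coeff_sum]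
  simp_rw [coeff_smul, coeff_mon, smul_eq_mul, mul_ite, mul_one, mul_zero]
  by_cases hm : m.degree = d
  · have h0 : m 0 + m 1 = d := by rw [← degree_eq, hm]
    have hle : m 0 ≤ d := le_of_add_le_left h0.le
    have key : ex (m 0) (d - m 0) = m := by
      have : d - m 0 = m 1 := by omega
      rw [this, ex_eq_self]
    rw [Finset.sum_eq_single_of_mem (m 0) (Finset.mem_range.mpr (by omega))]
    · rw [if_pos key, key]
    · intro i _ hi
      rw [if_neg]
      intro hc
      exact hi ((ex_inj (hc.trans key.symm)).1)
  · rw [hp.coeff_eq_zero hm, Finset.sum_eq_zero]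
    intro i hi
    rw [if_neg]
    intro hc
    apply hm
    rw [← hc, degree_ex]
    have := Finset.mem_range.mp hi
    omega

/-- membership in Forms from a representation-style sum -/
lemma polyComp_mem {d : ℕ} {p : V} (hp : p ∈ Forms d) (g : Matrix (Fin 2) (Fin 2) ℚ) :
    polyComp p g ∈ Forms d := by
  rw [mem_homogeneousSubmodule] at hp ⊢
  have := hp.aeval (fun i => MvPolynomial.C (g i 0) * MvPolynomial.X (0 : Fin 2)
      + MvPolynomial.C (g i 1) * MvPolynomial.X 1) (n := 1)
    (fun i => (isHomogeneous_C_mul_X _ _).add (isHomogeneous_C_mul_X _ _))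
  simpa [polyComp] using this

/-- The lower unipotent generator with parameter n : [[1,0],[n,1]]. -/
def δL (n : ℤ) : Matrix.SpecialLinearGroup (Fin 2) ℤ :=
  ⟨!![1, 0; n, 1], by simp [Matrix.det_fin_two_of]⟩

def δU (n : ℤ) : Matrix.SpecialLinearGroup (Fin 2) ℤ :=
  ⟨!![1, n; 0, 1], by simp [Matrix.det_fin_two_of]⟩

/-- generic substitution with polynomial parameter: x ↦ x, y ↦ T x + y -/
def ΨL : V →ₐ[ℚ] Polynomial V :=
  MvPolynomial.aeval
    (fun i => if i = 0 then Polynomial.C (X 0)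
      else Polynomial.X * Polynomial.C (X 0) + Polynomial.C (X 1))

/-- x ↦ T y + x, y ↦ y -/
def ΨU : V →ₐ[ℚ] Polynomial V :=
  MvPolynomial.aeval
    (fun i => if i = 0 then Polynomial.X * Polynomial.C (X 1) + Polynomial.C (X 0)
      else Polynomial.C (X 1))

lemma matQ_L (n : ℤ) : matQ (δL n) = !![1, 0; (n : ℚ), 1] := by
  ext i j; fin_cases i <;> fin_cases j <;> simp [matQ, δL]

lemma matQ_U (n : ℤ) : matQ (δU n) = !![1, (n : ℚ); 0, 1] := by
  ext i j; fin_cases i <;> fin_cases j <;> simp [matQ, δU]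

lemma ΨL_X0 : ΨL (X (0 : Fin 2)) = Polynomial.C (X 0) := by
  simp only [ΨL, aeval_X, reduceIte]

lemma ΨL_X1 : ΨL (X (1 : Fin 2)) = Polynomial.X * Polynomial.C (X 0) + Polynomial.C (X 1) := by
  simp only [ΨL, aeval_X, reduceIte, one_ne_zero]

lemma ΨL_C (a : ℚ) : ΨL (C a) = Polynomial.C (C a) := by
  simp only [ΨL, aeval_C, Polynomial.algebraMap_apply, MvPolynomial.algebraMap_eq]

lemma ΨU_X0 : ΨU (X (0 : Fin 2)) = Polynomial.X * Polynomial.C (X 1) + Polynomial.C (X 0) := by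
  simp only [ΨU, aeval_X, reduceIte]

lemma ΨU_X1 : ΨU (X (1 : Fin 2)) = Polynomial.C (X 1) := by
  simp only [ΨU, aeval_X, reduceIte, one_ne_zero]

lemma ΨU_C (a : ℚ) : ΨU (C a) = Polynomial.C (C a) := by
  simp only [ΨU, aeval_C, Polynomial.algebraMap_apply, MvPolynomial.algebraMap_eq]

lemma polyComp_L (p : V) (n : ℤ) :
    polyComp p (matQ (δL n)) = (ΨL p).eval (C (n : ℚ)) := by
  induction p using MvPolynomial.induction_on with
  | C a => simp [polyComp, ΨL_C, algebraMap_eq]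
  | add p q hp hq => simp only [polyComp, map_add, Polynomial.eval_add] at *; rw [hp, hq]
  | mul_X p i hp =>
      simp only [polyComp, map_mul, Polynomial.eval_mul] at *
      rw [hp]
      congr 1
      fin_cases i <;> simp only [Fin.zero_eta, Fin.mk_one, Fin.isValue]
      · rw [ΨL_X0, matQ_L, Polynomial.eval_C]
        norm_num
      · rw [ΨL_X1, matQ_L, Polynomial.eval_add, Polynomial.eval_mul,
          Polynomial.eval_X, Polynomial.eval_C, Polynomial.eval_C]
        norm_num [mul_comm]

lemma polyComp_U (p : V) (n : ℤ) :
    polyComp p (matQ (δU n)) = (ΨU p).eval (C (n : ℚ)) := by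
  induction p using MvPolynomial.induction_on with
  | C a => simp [polyComp, ΨU_C, algebraMap_eq]
  | add p q hp hq => simp only [polyComp, map_add, Polynomial.eval_add] at *; rw [hp, hq]
  | mul_X p i hp =>
      simp only [polyComp, map_mul, Polynomial.eval_mul] at *
      rw [hp]
      congr 1
      fin_cases i <;> simp only [Fin.zero_eta, Fin.mk_one, Fin.isValue]
      · rw [ΨU_X0, matQ_U, Polynomial.eval_add, Polynomial.eval_mul,
          Polynomial.eval_X, Polynomial.eval_C, Polynomial.eval_C]
        norm_num [mul_comm, add_comm]
      · rw [ΨU_X1, matQ_U, Polynomial.eval_C]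
        norm_num

def Lk (k : ℕ) : V →ₗ[ℚ] V where
  toFun p := (ΨL p).coeff k
  map_add' p q := by simp
  map_smul' c p := by simp

def Uk (k : ℕ) : V →ₗ[ℚ] V where
  toFun p := (ΨU p).coeff k
  map_add' p q := by simp
  map_smul' c p := by simp

lemma ΨL_mon (i j : ℕ) :
    ΨL (mon i j) = ∑ k ∈ range (j + 1),
      Polynomial.monomial k ((j.choose k : ℚ) • mon (i + k) (j - k)) := by
  rw [mon_eq, map_mul, map_pow, map_pow, ΨL_X0, ΨL_X1, add_pow, Finset.mul_sum]
  apply Finset.sum_congr rfl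
  intro k hk
  rw [mul_pow, ← Polynomial.C_pow, ← Polynomial.C_pow, ← Polynomial.C_pow,
    ← Polynomial.C_mul_X_pow_eq_monomial, MvPolynomial.smul_eq_C_mul, mon_eq]
  simp only [pow_add, map_mul, map_pow, map_natCast]
  ring

lemma ΨU_mon (i j : ℕ) :
    ΨU (mon i j) = ∑ k ∈ range (i + 1),
      Polynomial.monomial k ((i.choose k : ℚ) • mon (i - k) (j + k)) := by
  rw [mon_eq, map_mul, map_pow, map_pow, ΨU_X0, ΨU_X1, add_pow, Finset.sum_mul]
  apply Finset.sum_congr rfl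
  intro k hk
  rw [mul_pow, ← Polynomial.C_pow, ← Polynomial.C_pow, ← Polynomial.C_pow,
    ← Polynomial.C_mul_X_pow_eq_monomial, MvPolynomial.smul_eq_C_mul, mon_eq]
  simp only [pow_add, map_mul, map_pow, map_natCast]
  ring

lemma Lk_mon (k i j : ℕ) : Lk k (mon i j) = (j.choose k : ℚ) • mon (i + k) (j - k) := by
  show (ΨL (mon i j)).coeff k = _
  rw [ΨL_mon, Polynomial.finset_sum_coeff]
  simp_rw [Polynomial.coeff_monomial]
  by_cases hk : k ≤ j
  · rw [Finset.sum_eq_single_of_mem k (Finset.mem_range.mpr (by omega))]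
    · simp
    · intro k' _ hk'
      rw [if_neg (by omega)]
  · rw [Finset.sum_eq_zero, Nat.choose_eq_zero_of_lt (by omega), Nat.cast_zero, zero_smul]
    intro k' hk'
    have := Finset.mem_range.mp hk'
    rw [if_neg (by omega)]

lemma Uk_mon (k i j : ℕ) : Uk k (mon i j) = (i.choose k : ℚ) • mon (i - k) (j + k) := by
  show (ΨU (mon i j)).coeff k = _
  rw [ΨU_mon, Polynomial.finset_sum_coeff]
  simp_rw [Polynomial.coeff_monomial]
  by_cases hk : k ≤ i
  · rw [Finset.sum_eq_single_of_mem k (Finset.mem_range.mpr (by omega))]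
    · simp
    · intro k' _ hk'
      rw [if_neg (by omega)]
  · rw [Finset.sum_eq_zero, Nat.choose_eq_zero_of_lt (by omega), Nat.cast_zero, zero_smul]
    intro k' hk'
    have := Finset.mem_range.mp hk'
    rw [if_neg (by omega)]

lemma Lk_mem {d : ℕ} {p : V} (hp : p ∈ Forms d) (k : ℕ) : Lk k p ∈ Forms d := by
  rw [rep hp, map_sum]
  apply Submodule.sum_mem
  intro i hi
  rw [map_smul, Lk_mon]
  by_cases hk : k ≤ d - i
  · have h2 : i + k + (d - i - k) = d := by
      have := Finset.mem_range.mp hi; omega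
    have h3 := mon_mem (i + k) (d - i - k)
    rw [h2] at h3
    exact Submodule.smul_mem _ _ (Submodule.smul_mem _ _ h3)
  · rw [Nat.choose_eq_zero_of_lt (by omega), Nat.cast_zero, zero_smul, smul_zero]
    exact Submodule.zero_mem _

lemma Uk_mem {d : ℕ} {p : V} (hp : p ∈ Forms d) (k : ℕ) : Uk k p ∈ Forms d := by
  rw [rep hp, map_sum]
  apply Submodule.sum_mem
  intro i hi
  rw [map_smul, Uk_mon]
  by_cases hk : k ≤ i
  · have h2 : (i - k) + ((d - i) + k) = d := by
      have := Finset.mem_range.mp hi; omega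
    have h3 := mon_mem (i - k) ((d - i) + k)
    rw [h2] at h3
    exact Submodule.smul_mem _ _ (Submodule.smul_mem _ _ h3)
  · rw [Nat.choose_eq_zero_of_lt (by omega), Nat.cast_zero, zero_smul, smul_zero]
    exact Submodule.zero_mem _

lemma eval_decomp_L (p : V) {N : ℕ} (hN : (ΨL p).natDegree < N) (t : ℚ) :
    (ΨL p).eval (C t) = ∑ k ∈ range N, t ^ k • Lk k p := by
  rw [Polynomial.eval_eq_sum_range' hN]
  apply Finset.sum_congr rfl
  intro k _
  show (ΨL p).coeff k * (C t) ^ k = t ^ k • (ΨL p).coeff k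
  rw [← map_pow, MvPolynomial.smul_eq_C_mul, mul_comm]

lemma eval_decomp_U (p : V) {N : ℕ} (hN : (ΨU p).natDegree < N) (t : ℚ) :
    (ΨU p).eval (C t) = ∑ k ∈ range N, t ^ k • Uk k p := by
  rw [Polynomial.eval_eq_sum_range' hN]
  apply Finset.sum_congr rfl
  intro k _
  show (ΨU p).coeff k * (C t) ^ k = t ^ k • (ΨU p).coeff k
  rw [← map_pow, MvPolynomial.smul_eq_C_mul, mul_comm]

lemma extraction {N : ℕ} (v : ℕ → V)
    (h : ∀ n : ℤ, ∑ k ∈ range N, ((n : ℚ)) ^ k • v k = 0) :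
    ∀ k, k < N → v k = 0 := by
  intro k hk
  apply MvPolynomial.ext
  intro m
  set q : Polynomial ℚ := ∑ k ∈ range N, Polynomial.monomial k (coeff m (v k)) with hq
  have hroot : ∀ n : ℤ, q.IsRoot ((n : ℚ)) := by
    intro n
    have h2 := congrArg (coeff m) (h n)
    rw [coeff_sum, coeff_zero] at h2
    simp only [coeff_smul, smul_eq_mul] at h2
    simp only [Polynomial.IsRoot, hq, Polynomial.eval_finset_sum, Polynomial.eval_monomial]
    rw [← h2]
    apply Finset.sum_congr rfl
    intro k _
    ring
  have hq0 : q = 0 := by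
    apply Polynomial.eq_zero_of_infinite_isRoot
    apply Set.infinite_of_injective_forall_mem (f := (Int.cast : ℤ → ℚ))
    · exact Int.cast_injective
    · intro n
      exact hroot n
  have := congrArg (fun r => Polynomial.coeff r k) hq0
  simp only [hq, Polynomial.finset_sum_coeff, Polynomial.coeff_monomial,
    Polynomial.coeff_zero] at this
  rw [Finset.sum_eq_single_of_mem k (Finset.mem_range.mpr hk)] at this
  · simpa using this
  · intro k' _ hk'
    rw [if_neg hk']

lemma coeff_Lk1 {d : ℕ} {w : V} (hw : w ∈ Forms d) {j : ℕ} (hj : j < d) :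
    coeff (ex (j + 1) (d - (j + 1))) (Lk 1 w)
      = ((d - j : ℕ) : ℚ) * coeff (ex j (d - j)) w := by
  conv_lhs => rw [rep hw, map_sum]
  rw [coeff_sum, Finset.sum_eq_single_of_mem j (Finset.mem_range.mpr (by omega))]
  · rw [map_smul, Lk_mon, Nat.choose_one_right, coeff_smul, coeff_smul, coeff_mon,
      if_pos (by rw [Nat.sub_sub]), smul_eq_mul, smul_eq_mul, mul_one]
    ring
  · intro j' _ hj'
    rw [map_smul, Lk_mon, Nat.choose_one_right, coeff_smul, coeff_smul, coeff_mon, if_neg,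
      smul_eq_mul, smul_eq_mul, mul_zero, mul_zero]
    intro hc
    exact hj' (by have := (ex_inj hc).1; omega)

lemma coeff_Lk1_zero {d : ℕ} {w : V} (hw : w ∈ Forms d) :
    coeff (ex 0 d) (Lk 1 w) = 0 := by
  conv_lhs => rw [rep hw, map_sum]
  rw [coeff_sum, Finset.sum_eq_zero]
  intro j' _
  rw [map_smul, Lk_mon, Nat.choose_one_right, coeff_smul, coeff_smul, coeff_mon, if_neg,
    smul_eq_mul, smul_eq_mul, mul_zero, mul_zero]
  intro hc
  have := (ex_inj hc).1
  omega

lemma coeff_Uk1 {d : ℕ} {w : V} (hw : w ∈ Forms d) {j : ℕ} (hj : j + 1 ≤ d) :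
    coeff (ex j (d - j)) (Uk 1 w)
      = ((j + 1 : ℕ) : ℚ) * coeff (ex (j + 1) (d - (j + 1))) w := by
  conv_lhs => rw [rep hw, map_sum]
  rw [coeff_sum, Finset.sum_eq_single_of_mem (j + 1) (Finset.mem_range.mpr (by omega))]
  · rw [map_smul, Uk_mon, Nat.choose_one_right, coeff_smul, coeff_smul, coeff_mon,
      if_pos, smul_eq_mul, smul_eq_mul, mul_one]
    · push_cast; ring
    · have h1 : j + 1 - 1 = j := by omega
      have h2 : d - (j + 1) + 1 = d - j := by omega
      rw [h1, h2]
  · intro j' _ hj'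
    rw [map_smul, Uk_mon, Nat.choose_one_right, coeff_smul, coeff_smul, coeff_mon]
    by_cases h0 : j' = 0
    · subst h0; simp
    · rw [if_neg, smul_eq_mul, smul_eq_mul, mul_zero, mul_zero]
      intro hc
      exact hj' (by have := (ex_inj hc).1; omega)

lemma coeff_Uk1_zero {d : ℕ} {w : V} (hw : w ∈ Forms d) :
    coeff (ex d 0) (Uk 1 w) = 0 := by
  conv_lhs => rw [rep hw, map_sum]
  rw [coeff_sum, Finset.sum_eq_zero]
  intro j' hj'
  rw [map_smul, Uk_mon, Nat.choose_one_right, coeff_smul, coeff_smul, coeff_mon]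
  by_cases h0 : j' = 0
  · subst h0; simp
  · rw [if_neg, smul_eq_mul, smul_eq_mul, mul_zero, mul_zero]
    intro hc
    have h2 := (ex_inj hc).2
    have := Finset.mem_range.mp hj'
    omega

section

variable {a b : ℕ} (f : Forms a →ₗ[ℚ] Forms b)
  (hf : ∀ γ : Matrix.SpecialLinearGroup (Fin 2) ℤ, ∀ p : Forms a,
    ∀ h : polyComp (p : MvPolynomial (Fin 2) ℚ) (matQ γ⁻¹) ∈ Forms a,
      (f ⟨polyComp (p : MvPolynomial (Fin 2) ℚ) (matQ γ⁻¹), h⟩ : MvPolynomial (Fin 2) ℚ)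
        = polyComp (f p : MvPolynomial (Fin 2) ℚ) (matQ γ⁻¹))

include hf

lemma stepL (p : Forms a) (n : ℤ) (h : polyComp (p : V) (matQ (δL n)) ∈ Forms a) :
    (f ⟨polyComp (p : V) (matQ (δL n)), h⟩ : V) = polyComp (f p : V) (matQ (δL n)) := by
  have h2 := hf ((δL n)⁻¹) p (by rw [inv_inv]; exact h)
  simpa only [inv_inv] using h2

lemma stepU (p : Forms a) (n : ℤ) (h : polyComp (p : V) (matQ (δU n)) ∈ Forms a) :
    (f ⟨polyComp (p : V) (matQ (δU n)), h⟩ : V) = polyComp (f p : V) (matQ (δU n)) := by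
  have h2 := hf ((δU n)⁻¹) p (by rw [inv_inv]; exact h)
  simpa only [inv_inv] using h2

lemma commE (p : Forms a) :
    (f ⟨Lk 1 (p : V), Lk_mem p.2 1⟩ : V) = Lk 1 ((f p) : V) := by
  set N := max (ΨL (p : V)).natDegree (ΨL ((f p) : V)).natDegree + 2 with hN
  have hNp : (ΨL (p : V)).natDegree < N :=
    lt_of_le_of_lt (le_max_left _ _) (Nat.lt_add_of_pos_right (by norm_num))
  have hNfp : (ΨL ((f p) : V)).natDegree < N :=
    lt_of_le_of_lt (le_max_right _ _) (Nat.lt_add_of_pos_right (by norm_num))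
  have key : ∀ n : ℤ, ∑ k ∈ range N,
      ((n : ℚ)) ^ k • ((f ⟨Lk k (p : V), Lk_mem p.2 k⟩ : V) - Lk k ((f p) : V)) = 0 := by
    intro n
    have e1 : polyComp (p : V) (matQ (δL n)) = ∑ k ∈ range N, (n : ℚ) ^ k • Lk k (p : V) := by
      rw [polyComp_L, eval_decomp_L _ hNp]
    have e2 : polyComp ((f p) : V) (matQ (δL n))
        = ∑ k ∈ range N, (n : ℚ) ^ k • Lk k ((f p) : V) := by
      rw [polyComp_L, eval_decomp_L _ hNfp]
    have e1' : (⟨polyComp (p : V) (matQ (δL n)), polyComp_mem p.2 _⟩ : Forms a)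
        = ∑ k ∈ range N, (n : ℚ) ^ k • (⟨Lk k (p : V), Lk_mem p.2 k⟩ : Forms a) := by
      apply Subtype.ext
      show polyComp (p : V) _ = _
      rw [e1]
      simp
    have e3 : (f ⟨polyComp (p : V) (matQ (δL n)), polyComp_mem p.2 _⟩ : V)
        = ∑ k ∈ range N, (n : ℚ) ^ k • (f ⟨Lk k (p : V), Lk_mem p.2 k⟩ : V) := by
      rw [e1', map_sum f (fun k => (n : ℚ) ^ k • (⟨Lk k (p : V), Lk_mem p.2 k⟩ : Forms a))
        (range N), AddSubmonoidClass.coe_finset_sum]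
      refine Finset.sum_congr rfl fun k _ => ?_
      show ((f ((n : ℚ) ^ k • ⟨Lk k (p : V), Lk_mem p.2 k⟩)) : V)
        = (n : ℚ) ^ k • ((f ⟨Lk k (p : V), Lk_mem p.2 k⟩) : V)
      rw [map_smul]
      rfl
    have e4 := stepL f hf p n (polyComp_mem p.2 _)
    rw [e3, e2] at e4
    simp only [smul_sub]
    rw [Finset.sum_sub_distrib, e4, sub_self]
  have := extraction _ key 1 (by omega)
  exact sub_eq_zero.mp this

lemma commF (p : Forms a) :
    (f ⟨Uk 1 (p : V), Uk_mem p.2 1⟩ : V) = Uk 1 ((f p) : V) := by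
  set N := max (ΨU (p : V)).natDegree (ΨU ((f p) : V)).natDegree + 2 with hN
  have hNp : (ΨU (p : V)).natDegree < N :=
    lt_of_le_of_lt (le_max_left _ _) (Nat.lt_add_of_pos_right (by norm_num))
  have hNfp : (ΨU ((f p) : V)).natDegree < N :=
    lt_of_le_of_lt (le_max_right _ _) (Nat.lt_add_of_pos_right (by norm_num))
  have key : ∀ n : ℤ, ∑ k ∈ range N,
      ((n : ℚ)) ^ k • ((f ⟨Uk k (p : V), Uk_mem p.2 k⟩ : V) - Uk k ((f p) : V)) = 0 := by
    intro n
    have e1 : polyComp (p : V) (matQ (δU n)) = ∑ k ∈ range N, (n : ℚ) ^ k • Uk k (p : V) := by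
      rw [polyComp_U, eval_decomp_U _ hNp]
    have e2 : polyComp ((f p) : V) (matQ (δU n))
        = ∑ k ∈ range N, (n : ℚ) ^ k • Uk k ((f p) : V) := by
      rw [polyComp_U, eval_decomp_U _ hNfp]
    have e1' : (⟨polyComp (p : V) (matQ (δU n)), polyComp_mem p.2 _⟩ : Forms a)
        = ∑ k ∈ range N, (n : ℚ) ^ k • (⟨Uk k (p : V), Uk_mem p.2 k⟩ : Forms a) := by
      apply Subtype.ext
      show polyComp (p : V) _ = _
      rw [e1]
      simp
    have e3 : (f ⟨polyComp (p : V) (matQ (δU n)), polyComp_mem p.2 _⟩ : V)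
        = ∑ k ∈ range N, (n : ℚ) ^ k • (f ⟨Uk k (p : V), Uk_mem p.2 k⟩ : V) := by
      rw [e1', map_sum f (fun k => (n : ℚ) ^ k • (⟨Uk k (p : V), Uk_mem p.2 k⟩ : Forms a))
        (range N), AddSubmonoidClass.coe_finset_sum]
      refine Finset.sum_congr rfl fun k _ => ?_
      show ((f ((n : ℚ) ^ k • ⟨Uk k (p : V), Uk_mem p.2 k⟩)) : V)
        = (n : ℚ) ^ k • ((f ⟨Uk k (p : V), Uk_mem p.2 k⟩) : V)
      rw [map_smul]
      rfl
    have e4 := stepU f hf p n (polyComp_mem p.2 _)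
    rw [e3, e2] at e4
    simp only [smul_sub]
    rw [Finset.sum_sub_distrib, e4, sub_self]
  have := extraction _ key 1 (by omega)
  exact sub_eq_zero.mp this

end

section

variable {a b : ℕ}

/-- basis monomial of Forms a -/
def mi (a : ℕ) (i : ℕ) (hi : i ≤ a) : Forms a :=
  ⟨mon i (a - i), by
    have := mon_mem i (a - i)
    rwa [Nat.add_sub_cancel' hi] at this⟩

variable (f : Forms a →ₗ[ℚ] Forms b)
  (hf : ∀ γ : Matrix.SpecialLinearGroup (Fin 2) ℤ, ∀ p : Forms a,
    ∀ h : polyComp (p : MvPolynomial (Fin 2) ℚ) (matQ γ⁻¹) ∈ Forms a,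
      (f ⟨polyComp (p : MvPolynomial (Fin 2) ℚ) (matQ γ⁻¹), h⟩ : MvPolynomial (Fin 2) ℚ)
        = polyComp (f p : MvPolynomial (Fin 2) ℚ) (matQ γ⁻¹))

include hf

lemma RE (i : ℕ) (hi : i < a) :
    Lk 1 ((f (mi a i hi.le)) : V)
      = ((a - i : ℕ) : ℚ) • ((f (mi a (i + 1) hi)) : V) := by
  have h := commE f hf (mi a i hi.le)
  rw [← h]
  have e : (⟨Lk 1 ((mi a i hi.le : Forms a) : V), Lk_mem (mi a i hi.le).2 1⟩ : Forms a)
      = ((a - i : ℕ) : ℚ) • mi a (i + 1) hi := by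
    apply Subtype.ext
    show Lk 1 (mon i (a - i)) = _
    rw [Lk_mon, Nat.choose_one_right]
    show _ = ((a - i : ℕ) : ℚ) • mon (i + 1) (a - (i + 1))
    rw [Nat.sub_sub]
  rw [e, map_smul]
  rfl

lemma REtop : Lk 1 ((f (mi a a le_rfl)) : V) = 0 := by
  have h := commE f hf (mi a a le_rfl)
  rw [← h]
  have e : (⟨Lk 1 ((mi a a le_rfl : Forms a) : V), Lk_mem (mi a a le_rfl).2 1⟩ : Forms a)
      = 0 := by
    apply Subtype.ext
    show Lk 1 (mon a (a - a)) = _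
    rw [Lk_mon, Nat.sub_self]
    simp
  rw [e, map_zero]
  rfl

lemma RF (i : ℕ) (hi : i + 1 ≤ a) :
    Uk 1 ((f (mi a (i + 1) hi)) : V)
      = ((i + 1 : ℕ) : ℚ) • ((f (mi a i (by omega))) : V) := by
  have h := commF f hf (mi a (i + 1) hi)
  rw [← h]
  have e : (⟨Uk 1 ((mi a (i + 1) hi : Forms a) : V), Uk_mem (mi a (i + 1) hi).2 1⟩ : Forms a)
      = ((i + 1 : ℕ) : ℚ) • mi a i (by omega) := by
    apply Subtype.ext
    show Uk 1 (mon (i + 1) (a - (i + 1))) = _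
    rw [Uk_mon, Nat.choose_one_right]
    show _ = ((i + 1 : ℕ) : ℚ) • mon i (a - i)
    congr 2
    omega
  rw [e, map_smul]
  rfl

lemma RFbot : Uk 1 ((f (mi a 0 (Nat.zero_le a))) : V) = 0 := by
  have h := commF f hf (mi a 0 (Nat.zero_le a))
  rw [← h]
  have e : (⟨Uk 1 ((mi a 0 (Nat.zero_le a) : Forms a) : V),
      Uk_mem (mi a 0 (Nat.zero_le a)).2 1⟩ : Forms a) = 0 := by
    apply Subtype.ext
    show Uk 1 (mon 0 (a - 0)) = _
    rw [Uk_mon]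
    simp
  rw [e, map_zero]
  rfl

lemma S1 (i j : ℕ) (hi : i < a) (hj : j < b) :
    ((b - j : ℕ) : ℚ) * coeff (ex j (b - j)) ((f (mi a i hi.le)) : V)
      = ((a - i : ℕ) : ℚ) * coeff (ex (j + 1) (b - (j + 1))) ((f (mi a (i + 1) hi)) : V) := by
  have h := congrArg (coeff (ex (j + 1) (b - (j + 1)))) (RE f hf i hi)
  rwa [coeff_Lk1 (f (mi a i hi.le)).2 hj, coeff_smul, smul_eq_mul] at h

lemma S2 (i : ℕ) (hi : i < a) :
    ((a - i : ℕ) : ℚ) * coeff (ex 0 b) ((f (mi a (i + 1) hi)) : V) = 0 := by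
  have h := congrArg (coeff (ex 0 b)) (RE f hf i hi)
  rwa [coeff_Lk1_zero (f (mi a i hi.le)).2, coeff_smul, smul_eq_mul, eq_comm] at h

lemma S3 (j : ℕ) (hj : j < b) :
    ((b - j : ℕ) : ℚ) * coeff (ex j (b - j)) ((f (mi a a le_rfl)) : V) = 0 := by
  have h := congrArg (coeff (ex (j + 1) (b - (j + 1)))) (REtop f hf)
  rwa [coeff_Lk1 (f (mi a a le_rfl)).2 hj, coeff_zero] at h

lemma S4 (i j : ℕ) (hi : i + 1 ≤ a) (hj : j + 1 ≤ b) :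
    ((j + 1 : ℕ) : ℚ) * coeff (ex (j + 1) (b - (j + 1))) ((f (mi a (i + 1) hi)) : V)
      = ((i + 1 : ℕ) : ℚ) * coeff (ex j (b - j)) ((f (mi a i (by omega))) : V) := by
  have h := congrArg (coeff (ex j (b - j))) (RF f hf i hi)
  rwa [coeff_Uk1 (f (mi a (i + 1) hi)).2 hj, coeff_smul, smul_eq_mul] at h

lemma S5 (i : ℕ) (hi : i + 1 ≤ a) :
    ((i + 1 : ℕ) : ℚ) * coeff (ex b (b - b)) ((f (mi a i (by omega))) : V) = 0 := by
  have h := congrArg (coeff (ex b 0)) (RF f hf i hi)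
  rw [coeff_Uk1_zero (f (mi a (i + 1) hi)).2, coeff_smul, smul_eq_mul, eq_comm] at h
  rwa [Nat.sub_self]

lemma S6 (j : ℕ) (hj : j + 1 ≤ b) :
    ((j + 1 : ℕ) : ℚ) * coeff (ex (j + 1) (b - (j + 1))) ((f (mi a 0 (Nat.zero_le a))) : V)
      = 0 := by
  have h := congrArg (coeff (ex j (b - j))) (RFbot f hf)
  rwa [coeff_Uk1 (f (mi a 0 (Nat.zero_le a))).2 hj, coeff_zero] at h

omit hf

/-- matrix coefficients of f -/
def cij (i j : ℕ) : ℚ :=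
  if h : i ≤ a then coeff (ex j (b - j)) ((f (mi a i h)) : V) else 0

lemma cij_eq (i j : ℕ) (hi : i ≤ a) :
    cij f i j = coeff (ex j (b - j)) ((f (mi a i hi)) : V) := dif_pos hi

include hf

omit hf in
lemma cancel {x y : ℚ} (hx : x ≠ 0) (h : x * y = 0) : y = 0 := by
  rcases mul_eq_zero.mp h with h | h
  · exact absurd h hx
  · exact h

lemma C1 : ∀ i, i ≤ a → ∀ j, j ≤ b → i < j → cij f i j = 0 := by
  intro i
  induction i with
  | zero =>
      intro _ j hj hij
      obtain ⟨j', rfl⟩ : ∃ j', j = j' + 1 := ⟨j - 1, by omega⟩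
      have h := S6 f hf j' hj
      rw [cij_eq f _ _ (Nat.zero_le a)]
      exact cancel (Nat.cast_ne_zero.mpr (by omega)) h
  | succ i IH =>
      intro hi j hj hij
      obtain ⟨j', rfl⟩ : ∃ j', j = j' + 1 := ⟨j - 1, by omega⟩
      have h := S4 f hf i j' hi hj
      rw [← cij_eq f _ _ hi, ← cij_eq f _ _ (by omega), IH (by omega) j' (by omega) (by omega),
        mul_zero] at h
      exact cancel (Nat.cast_ne_zero.mpr (by omega)) h

lemma C2 : ∀ j, j ≤ b → ∀ i, i ≤ a → j < i → cij f i j = 0 := by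
  intro j
  induction j with
  | zero =>
      intro _ i hi hij
      obtain ⟨i', rfl⟩ : ∃ i', i = i' + 1 := ⟨i - 1, by omega⟩
      have h := S2 f hf i' hi
      rw [cij_eq f _ _ hi]
      simp only [Nat.sub_zero]
      exact cancel (Nat.cast_ne_zero.mpr (by omega)) h
  | succ j IH =>
      intro hj i hi hij
      obtain ⟨i', rfl⟩ : ∃ i', i = i' + 1 := ⟨i - 1, by omega⟩
      have h := S1 f hf i' j hi (by omega)
      rw [← cij_eq f _ _ (by omega : i' ≤ a), ← cij_eq f _ _ hi,
        IH (by omega) i' (by omega) (by omega), mul_zero] at h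
      exact cancel (Nat.cast_ne_zero.mpr (by omega)) h.symm

lemma Cdiag : ∀ t, t ≤ a → t ≤ b → cij f t t = cij f 0 0 := by
  intro t
  induction t with
  | zero => intro _ _; rfl
  | succ t IH =>
      intro ht hb
      have h := S4 f hf t t ht hb
      rw [← cij_eq f _ _ ht, ← cij_eq f _ _ (by omega : t ≤ a)] at h
      have h2 := mul_left_cancel₀ (Nat.cast_ne_zero.mpr (by omega) :
        ((t + 1 : ℕ) : ℚ) ≠ 0) h
      rw [h2, IH (by omega) (by omega)]

lemma Czero (hab : a ≠ b) : cij f 0 0 = 0 := by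
  rcases Nat.lt_or_ge a b with hab' | hab'
  · have h := S3 f hf a hab'
    rw [← cij_eq f _ _ le_rfl, Cdiag f hf a le_rfl hab'.le] at h
    exact cancel (Nat.cast_ne_zero.mpr (by omega)) h
  · have hba : b < a := by omega
    have h := S5 f hf b hba
    rw [← cij_eq f _ _ (by omega : b ≤ a), Cdiag f hf b (by omega) le_rfl] at h
    exact cancel (Nat.cast_ne_zero.mpr (by omega)) h

omit hf

lemma fp_eq (p : Forms a) :
    (f p : V) = ∑ i ∈ range (a + 1), coeff (ex i (a - i)) (p : V) •
      (if h : i ≤ a then ((f (mi a i h)) : V) else 0) := by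
  have hp : p = ∑ i ∈ range (a + 1), coeff (ex i (a - i)) (p : V) •
      (if h : i ≤ a then mi a i h else 0) := by
    apply Subtype.ext
    rw [AddSubmonoidClass.coe_finset_sum]
    conv_lhs => rw [rep p.2]
    refine Finset.sum_congr rfl fun i hi => ?_
    rw [dif_pos (by have := Finset.mem_range.mp hi; omega)]
    rfl
  conv_lhs => rw [hp, map_sum f _ (range (a + 1)), AddSubmonoidClass.coe_finset_sum]
  refine Finset.sum_congr rfl fun i hi => ?_
  have hia : i ≤ a := by have := Finset.mem_range.mp hi; omega
  rw [dif_pos hia, dif_pos hia]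
  show ((f (coeff (ex i (a - i)) (p : V) • mi a i hia)) : V) = _
  rw [map_smul]
  rfl

include hf in
lemma main (hab : a ≠ b) : f = 0 := by
  apply LinearMap.ext
  intro p
  apply Subtype.ext
  show (f p : V) = 0
  rw [fp_eq f p]
  apply Finset.sum_eq_zero
  intro i hi
  have hia : i ≤ a := by have := Finset.mem_range.mp hi; omega
  rw [dif_pos hia]
  have hw : ((f (mi a i hia)) : V) = 0 := by
    rw [rep (f (mi a i hia)).2]
    apply Finset.sum_eq_zero
    intro j hj
    have hjb : j ≤ b := by have := Finset.mem_range.mp hj; omega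
    have hcz : coeff (ex j (b - j)) ((f (mi a i hia)) : V) = 0 := by
      rw [← cij_eq f i j hia]
      rcases lt_trichotomy i j with h | h | h
      · exact C1 f hf i hia j hjb h
      · subst h
        rw [Cdiag f hf i hia hjb, Czero f hf hab]
      · exact C2 f hf j hjb i hia h
    rw [hcz, zero_smul]
  rw [hw, smul_zero]

end

section

variable {a : ℕ} (f : Forms a →ₗ[ℚ] Forms a)
  (hf : ∀ γ : Matrix.SpecialLinearGroup (Fin 2) ℤ, ∀ p : Forms a,
    ∀ h : polyComp (p : MvPolynomial (Fin 2) ℚ) (matQ γ⁻¹) ∈ Forms a,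
      (f ⟨polyComp (p : MvPolynomial (Fin 2) ℚ) (matQ γ⁻¹), h⟩ : MvPolynomial (Fin 2) ℚ)
        = polyComp (f p : MvPolynomial (Fin 2) ℚ) (matQ γ⁻¹))

include hf

lemma main2 (p : Forms a) : (f p : V) = cij f 0 0 • (p : V) := by
  calc (f p : V) = ∑ i ∈ range (a + 1), coeff (ex i (a - i)) (p : V) •
      (if h : i ≤ a then ((f (mi a i h)) : V) else 0) := fp_eq f p
    _ = ∑ i ∈ range (a + 1), cij f 0 0 • (coeff (ex i (a - i)) (p : V) • mon i (a - i)) := by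
        refine Finset.sum_congr rfl fun i hi => ?_
        have hia : i ≤ a := by have := Finset.mem_range.mp hi; omega
        rw [dif_pos hia]
        have hw : ((f (mi a i hia)) : V) = cij f 0 0 • mon i (a - i) := by
          rw [rep (f (mi a i hia)).2]
          rw [Finset.sum_eq_single_of_mem i (Finset.mem_range.mpr (by omega))]
          · rw [← cij_eq f i i hia, Cdiag f hf i hia hia]
          · intro j hj hji
            have hjb : j ≤ a := by have := Finset.mem_range.mp hj; omega
            have hcz : coeff (ex j (a - j)) ((f (mi a i hia)) : V) = 0 := by
              rw [← cij_eq f i j hia]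
              rcases lt_or_gt_of_ne hji with h | h
              · exact C2 f hf j hjb i hia h
              · exact C1 f hf i hia j hjb h
            rw [hcz, zero_smul]
        rw [hw, smul_comm]
    _ = cij f 0 0 • ∑ i ∈ range (a + 1), coeff (ex i (a - i)) (p : V) • mon i (a - i) := by
        rw [Finset.smul_sum]
    _ = cij f 0 0 • (p : V) := by rw [← rep p.2]

end

end

end Equiv53

/-- A `ℚ`-linear map `Forms_a → Forms_b` which is equivariant for the substitution actions
`γ • p = p ∘ γ⁻¹` of `SL₂(ℤ)` is zero if `a ≠ b`, and a scalar multiple of the identity if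
`a = b`: the invariants of `Sym^a ⊗ Sym^b` have dimension `1` if `a = b` and `0` otherwise. -/
theorem equivariant_map_between_symmetric_powers
    (a b : ℕ) (f : Forms a →ₗ[ℚ] Forms b)
    (hf : ∀ γ : Matrix.SpecialLinearGroup (Fin 2) ℤ, ∀ p : Forms a,
      ∀ h : polyComp (p : MvPolynomial (Fin 2) ℚ) (matQ γ⁻¹) ∈ Forms a,
        (f ⟨polyComp (p : MvPolynomial (Fin 2) ℚ) (matQ γ⁻¹), h⟩ : MvPolynomial (Fin 2) ℚ)
          = polyComp (f p : MvPolynomial (Fin 2) ℚ) (matQ γ⁻¹)) :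
    (a ≠ b → f = 0) ∧
    (a = b → ∃ c : ℚ, ∀ p : Forms a,
      (f p : MvPolynomial (Fin 2) ℚ) = c • (p : MvPolynomial (Fin 2) ℚ)) := by
  constructor
  · intro hab
    exact Equiv53.main f hf hab
  · intro hab
    subst hab
    exact ⟨Equiv53.cij f 0 0, Equiv53.main2 f hf⟩
end

section
/- Let m : ℕ and consider ℚ-linear maps f : ℚ² → Forms_m that are SL₂(ℤ)-equivariant, where SL₂(ℤ) acts on ℚ² by the standard matrix-vector action and on Forms_m by the substitution action. If m ≠ 1, every such equivariant map is zero; if m = 1, the space of such equivariant maps is one-dimensional, spanned by (u,v) ↦ u·y − v·x. (This encodes that V ⊗ Sym^m V has a nonzero SL₂(ℤ)-invariant vector if and only if m = 1, used in the proof of Proposition 3.4.) -/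
/-- The spanning map `(u,v) ↦ u·y − v·x`, as a polynomial in `ℚ[x,y]`. -/
noncomputable def spanPoly (v : Fin 2 → ℚ) : MvPolynomial (Fin 2) ℚ :=
  MvPolynomial.C (v 0) * MvPolynomial.X 1 - MvPolynomial.C (v 1) * MvPolynomial.X 0

open MvPolynomial

lemma eval_polyComp (p : MvPolynomial (Fin 2) ℚ) (g : Matrix (Fin 2) (Fin 2) ℚ)
    (w : Fin 2 → ℚ) :
    MvPolynomial.eval w (polyComp p g) = MvPolynomial.eval (g.mulVec w) p := by
  unfold polyComp
  rw [MvPolynomial.aeval_def, MvPolynomial.algebraMap_eq, ← MvPolynomial.eval_assoc]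
  have hfun : (⇑(MvPolynomial.eval w) ∘ fun i =>
      MvPolynomial.C (g i 0) * MvPolynomial.X 0 + MvPolynomial.C (g i 1) * MvPolynomial.X 1)
      = g.mulVec w := by
    funext i
    simp [Matrix.mulVec, dotProduct, Fin.sum_univ_two]
  rw [hfun]

lemma polyComp_zero (g : Matrix (Fin 2) (Fin 2) ℚ) : polyComp 0 g = 0 := by
  simp [polyComp]

lemma eval_smul_of_isHomogeneous {p : MvPolynomial (Fin 2) ℚ} {m : ℕ}
    (hp : p.IsHomogeneous m) (t : ℚ) (w : Fin 2 → ℚ) :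
    MvPolynomial.eval (t • w) p = t ^ m * MvPolynomial.eval w p := by
  rw [MvPolynomial.eval_eq, MvPolynomial.eval_eq, Finset.mul_sum]
  refine Finset.sum_congr rfl fun d hd => ?_
  have hdeg : d.degree = m := by
    by_contra h
    exact (MvPolynomial.mem_support_iff.mp hd) (hp.coeff_eq_zero h)
  have : (∏ i ∈ d.support, (t • w) i ^ d i)
      = t ^ m * ∏ i ∈ d.support, w i ^ d i := by
    simp only [Pi.smul_apply, smul_eq_mul, mul_pow]
    rw [Finset.prod_mul_distrib, Finset.prod_pow_eq_pow_sum]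
    rw [show (∑ i ∈ d.support, d i) = m from hdeg]
  rw [this]; ring

/-- A homogeneous polynomial invariant under all integer shears `x ↦ x + n y`
is a multiple of `y ^ m`. -/
lemma homog_classify {m : ℕ} {p : MvPolynomial (Fin 2) ℚ}
    (hp : p.IsHomogeneous m)
    (hper : ∀ n : ℤ, polyComp p !![1, (n : ℚ); 0, 1] = p) :
    p = MvPolynomial.C (MvPolynomial.eval ![0, 1] p) * MvPolynomial.X 1 ^ m := by
  set c : ℚ := MvPolynomial.eval ![0, 1] p with hc
  -- the one-variable polynomial p(X, 1)
  set P : Polynomial ℚ := MvPolynomial.eval₂ Polynomial.C ![Polynomial.X, 1] p with hPdef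
  have hPe : ∀ s : ℚ, P.eval s = MvPolynomial.eval ![s, 1] p := by
    intro s
    have := MvPolynomial.eval₂_comp_left (Polynomial.evalRingHom s) Polynomial.C
      ![Polynomial.X, 1] p
    rw [hPdef]
    show (Polynomial.evalRingHom s) (MvPolynomial.eval₂ Polynomial.C ![Polynomial.X, 1] p) = _
    rw [this]
    have h1 : (Polynomial.evalRingHom s).comp Polynomial.C = RingHom.id ℚ := by
      ext a; simp
    have h2 : (⇑(Polynomial.evalRingHom s) ∘ ![Polynomial.X, 1]) = ![s, 1] := by
      funext i; fin_cases i <;> simp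
    rw [h1, h2, MvPolynomial.eval₂_id]
  have hint : ∀ n : ℤ, MvPolynomial.eval ![(n : ℚ), 1] p = c := by
    intro n
    have := congrArg (MvPolynomial.eval ![(0 : ℚ), 1]) (hper n)
    rw [eval_polyComp] at this
    have hmv : (!![1, (n : ℚ); 0, 1]).mulVec ![0, 1] = ![(n : ℚ), 1] := by
      funext i; fin_cases i <;>
        simp [Matrix.mulVec, dotProduct, Fin.sum_univ_two]
    rw [hmv] at this
    exact this
  have hP : P = Polynomial.C c := by
    have hroot : ∀ n : ℕ, (P - Polynomial.C c).IsRoot (n : ℚ) := by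
      intro n
      simp only [Polynomial.IsRoot, Polynomial.eval_sub, Polynomial.eval_C]
      rw [hPe]
      have := hint (n : ℤ)
      push_cast at this
      rw [this]; ring
    have h0 : P - Polynomial.C c = 0 := by
      apply Polynomial.eq_zero_of_infinite_isRoot
      exact Set.infinite_of_injective_forall_mem (Nat.cast_injective (R := ℚ)) hroot
    linear_combination (norm := ring_nf) h0
  -- now show `X 1 * p = X 1 * (C c * X 1 ^ m)` by evaluation
  have key : (MvPolynomial.X 1 : MvPolynomial (Fin 2) ℚ) * p
      = MvPolynomial.X 1 * (MvPolynomial.C c * MvPolynomial.X 1 ^ m) := by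
    apply MvPolynomial.funext
    intro w
    simp only [MvPolynomial.eval_mul, MvPolynomial.eval_pow, MvPolynomial.eval_C,
      MvPolynomial.eval_X]
    rcases eq_or_ne (w 1) 0 with h | h
    · rw [h]; ring
    · have hw : w = (w 1) • ![w 0 / w 1, 1] := by
        funext i; fin_cases i <;> simp <;> field_simp
      have := eval_smul_of_isHomogeneous hp (w 1) ![w 0 / w 1, 1]
      rw [← hw] at this
      rw [this, ← hPe, hP]
      simp [mul_comm]
  exact mul_left_cancel₀ (MvPolynomial.X_ne_zero 1) key

/-- Upper triangular shear matrices in `SL₂(ℤ)`. -/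
def Tmat (n : ℤ) : Matrix.SpecialLinearGroup (Fin 2) ℤ :=
  ⟨!![1, n; 0, 1], by simp [Matrix.det_fin_two_of]⟩

/-- The lower triangular shear. -/
def Umat : Matrix.SpecialLinearGroup (Fin 2) ℤ :=
  ⟨!![1, 0; 1, 1], by simp [Matrix.det_fin_two_of]⟩

lemma matQ_Tmat (n : ℤ) : matQ (Tmat n) = !![1, (n : ℚ); 0, 1] := by
  funext i j
  fin_cases i <;> fin_cases j <;> simp [matQ, Tmat, Matrix.map_apply]

lemma matQ_Tmat_inv (n : ℤ) : matQ (Tmat n)⁻¹ = !![1, -(n : ℚ); 0, 1] := by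
  have h := Matrix.SpecialLinearGroup.coe_inv (Tmat n)
  rw [Matrix.adjugate_fin_two] at h
  rw [matQ, h]
  funext i j
  fin_cases i <;> fin_cases j <;> simp [matQ, h, Tmat, Matrix.map_apply]

lemma matQ_Umat : matQ Umat = !![1, 0; 1, 1] := by
  funext i j
  fin_cases i <;> fin_cases j <;> simp [matQ, Umat, Matrix.map_apply]

lemma matQ_Umat_inv : matQ Umat⁻¹ = !![1, 0; -1, 1] := by
  have h := Matrix.SpecialLinearGroup.coe_inv Umat
  rw [Matrix.adjugate_fin_two] at h
  rw [matQ, h]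
  funext i j
  fin_cases i <;> fin_cases j <;> simp [matQ, h, Umat, Matrix.map_apply]

/-- An `SL₂(ℤ)`-equivariant `ℚ`-linear map `ℚ² → Forms_m` (standard action on `ℚ²`,
substitution action on `Forms_m`) is zero if `m ≠ 1`; if `m = 1`, the space of such maps
is one-dimensional, spanned by `(u,v) ↦ u·y − v·x` (which is itself equivariant). -/
theorem equivariant_map_standard_to_symmetric_power
    (m : ℕ) (f : (Fin 2 → ℚ) →ₗ[ℚ] Forms m)
    (hf : ∀ γ : Matrix.SpecialLinearGroup (Fin 2) ℤ, ∀ v : Fin 2 → ℚ,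
      (f ((matQ γ).mulVec v) : MvPolynomial (Fin 2) ℚ)
        = polyComp (f v : MvPolynomial (Fin 2) ℚ) (matQ γ⁻¹)) :
    (m ≠ 1 → f = 0) ∧
    (m = 1 → (∃ c : ℚ, ∀ v : Fin 2 → ℚ,
        (f v : MvPolynomial (Fin 2) ℚ) = c • spanPoly v) ∧
      (∀ γ : Matrix.SpecialLinearGroup (Fin 2) ℤ, ∀ v : Fin 2 → ℚ,
        spanPoly ((matQ γ).mulVec v) = polyComp (spanPoly v) (matQ γ⁻¹))) := by
  set p : MvPolynomial (Fin 2) ℚ := (f ![1, 0] : MvPolynomial (Fin 2) ℚ) with hpdef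
  set q : MvPolynomial (Fin 2) ℚ := (f ![0, 1] : MvPolynomial (Fin 2) ℚ) with hqdef
  have hp : p.IsHomogeneous m :=
    (MvPolynomial.mem_homogeneousSubmodule m _).mp (f ![1, 0]).2
  -- shear invariance of p
  have hper : ∀ n : ℤ, polyComp p !![1, (n : ℚ); 0, 1] = p := by
    intro n
    have h := hf (Tmat (-n)) ![1, 0]
    rw [matQ_Tmat, matQ_Tmat_inv] at h
    have hmv : (!![1, ((-n : ℤ) : ℚ); 0, 1]).mulVec ![1, 0] = ![1, 0] := by
      funext i; fin_cases i <;>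
        simp [Matrix.mulVec, dotProduct, Fin.sum_univ_two]
    rw [hmv] at h
    have : (-(((-n : ℤ)) : ℚ)) = (n : ℚ) := by push_cast; ring
    rw [this] at h
    exact h.symm
  set c : ℚ := MvPolynomial.eval ![0, 1] p with hcdef
  have hpc : p = MvPolynomial.C c * MvPolynomial.X 1 ^ m := homog_classify hp hper
  -- relation from Umat at e₀ : p + q = polyComp p U⁻¹
  have sum11 : (![(1 : ℚ), 1] : Fin 2 → ℚ) = ![1, 0] + ![0, 1] := by
    funext i; fin_cases i <;> simp
  have hfsum : (f ![(1 : ℚ), 1] : MvPolynomial (Fin 2) ℚ) = p + q := by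
    rw [sum11, map_add]; rfl
  have hR : p + q = polyComp p !![1, 0; -1, 1] := by
    have h := hf Umat ![1, 0]
    rw [matQ_Umat, matQ_Umat_inv] at h
    have hmv : (!![(1 : ℚ), 0; 1, 1]).mulVec ![1, 0] = ![1, 1] := by
      funext i; fin_cases i <;>
        simp [Matrix.mulVec, dotProduct, Fin.sum_univ_two]
    rw [hmv, hfsum] at h
    exact h
  have hR2 : p + q = polyComp q !![1, -1; 0, 1] := by
    have h := hf (Tmat 1) ![0, 1]
    rw [matQ_Tmat, matQ_Tmat_inv] at h
    have hmv : (!![(1 : ℚ), ((1 : ℤ) : ℚ); 0, 1]).mulVec ![0, 1] = ![1, 1] := by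
      funext i; fin_cases i <;>
        simp [Matrix.mulVec, dotProduct, Fin.sum_univ_two]
    rw [hmv, hfsum] at h
    norm_num at h
    exact h
  -- the key coefficient equation
  have keyc : c * ((-2 : ℚ) ^ m - (-1 : ℚ) ^ m + 1) = 0 := by
    have hq : q = polyComp p !![1, 0; -1, 1] - p := by
      rw [← hR]; ring
    have h := congrArg (MvPolynomial.eval ![(3 : ℚ), 1]) hR2
    rw [MvPolynomial.eval_add, eval_polyComp] at h
    have hmv : (!![(1 : ℚ), -1; 0, 1]).mulVec ![3, 1] = ![2, 1] := by
      funext i; fin_cases i <;>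
        simp [Matrix.mulVec, dotProduct, Fin.sum_univ_two] <;> norm_num
    rw [hmv] at h
    have evq : ∀ s t : ℚ, MvPolynomial.eval ![s, t] q
        = MvPolynomial.eval ![s, t - s] p - MvPolynomial.eval ![s, t] p := by
      intro s t
      rw [hq, MvPolynomial.eval_sub, eval_polyComp]
      have hmv2 : (!![(1 : ℚ), 0; -1, 1]).mulVec ![s, t] = ![s, t - s] := by
        funext i; fin_cases i <;>
          simp [Matrix.mulVec, dotProduct, Fin.sum_univ_two] <;> ring
      rw [hmv2]
    have evp : ∀ s t : ℚ, MvPolynomial.eval ![s, t] p = c * t ^ m := by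
      intro s t
      rw [hpc]
      simp
    rw [evq 3 1, evq 2 1] at h
    simp only [evp] at h
    linear_combination h
  constructor
  · -- m ≠ 1
    intro hm
    have hcoef : ((-2 : ℚ) ^ m - (-1 : ℚ) ^ m + 1) ≠ 0 := by
      rcases Nat.even_or_odd m with he | ho
      · rw [he.neg_pow, he.neg_one_pow]
        have : (0 : ℚ) < 2 ^ m := by positivity
        linarith
      · rw [ho.neg_pow, ho.neg_one_pow]
        have hm3 : 3 ≤ m := by
          rcases ho with ⟨k, hk⟩
          omega
        have : (2 : ℚ) ^ 3 ≤ 2 ^ m := by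
          apply pow_le_pow_right₀ (by norm_num) hm3
        norm_num at this ⊢
        linarith
    have hc0 : c = 0 := by
      rcases mul_eq_zero.mp keyc with h | h
      · exact h
      · exact absurd h hcoef
    have hp0 : p = 0 := by rw [hpc, hc0]; simp
    have hq0 : q = 0 := by
      have hq : q = polyComp p !![1, 0; -1, 1] - p := by rw [← hR]; ring
      rw [hq, hp0, polyComp_zero]; simp
    apply LinearMap.ext
    intro v
    have hv : v = v 0 • ![(1 : ℚ), 0] + v 1 • ![0, 1] := by
      funext i; fin_cases i <;> simp
    rw [hv, map_add, map_smul, map_smul]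
    have h1 : f ![(1 : ℚ), 0] = 0 := by
      apply Subtype.ext; exact hp0
    have h2 : f ![(0 : ℚ), 1] = 0 := by
      apply Subtype.ext; exact hq0
    rw [h1, h2]
    simp
  · -- m = 1
    intro hm
    subst hm
    constructor
    · refine ⟨c, fun v => ?_⟩
      have hq : q = polyComp p !![1, 0; -1, 1] - p := by rw [← hR]; ring
      have hqc : q = -(MvPolynomial.C c) * MvPolynomial.X 0 := by
        rw [hq, hpc]
        simp [polyComp, MvPolynomial.algebraMap_eq]
        ring
      have hv : v = v 0 • ![(1 : ℚ), 0] + v 1 • ![0, 1] := by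
        funext i; fin_cases i <;> simp
      have hfv : (f v : MvPolynomial (Fin 2) ℚ) = v 0 • p + v 1 • q := by
        conv_lhs => rw [hv]
        rw [map_add, map_smul, map_smul]
        rfl
      rw [hfv, hpc, hqc, spanPoly]
      rw [MvPolynomial.smul_eq_C_mul, MvPolynomial.smul_eq_C_mul, MvPolynomial.smul_eq_C_mul]
      simp only [map_mul, map_neg, pow_one]
      ring
    · intro γ v
      have hinv : matQ γ⁻¹ = !![((γ : Matrix (Fin 2) (Fin 2) ℤ) 1 1 : ℚ),
          -((γ : Matrix (Fin 2) (Fin 2) ℤ) 0 1 : ℚ);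
          -((γ : Matrix (Fin 2) (Fin 2) ℤ) 1 0 : ℚ),
          ((γ : Matrix (Fin 2) (Fin 2) ℤ) 0 0 : ℚ)] := by
        funext i j
        have h := Matrix.SpecialLinearGroup.coe_inv γ
        rw [Matrix.adjugate_fin_two] at h
        fin_cases i <;> fin_cases j <;>
          simp [matQ, h, Matrix.map_apply]
      rw [hinv]
      simp [spanPoly, polyComp, MvPolynomial.algebraMap_eq, Matrix.mulVec,
        dotProduct, Fin.sum_univ_two, matQ, Matrix.map_apply]
      push_cast
      ring
end

section
/- Let p ≥ 2, let W be a ℚ-vector space, and let ρ be a representation of the symmetric group S_p = Equiv.Perm (Fin p) on W such that the only vector w ∈ W with ρ(τ) w = w for the transposition τ = Equiv.swap 0 1 is w = 0. Then ρ is a multiple of the sign representation: for every σ ∈ S_p, ρ(σ) = (sign σ) • id_W. (This is the step in the proof of Proposition 3.3: the only representation of S_p containing no copy of the trivial representation when restricted to an S_2 is the alternating one.) -/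
/-- A representation of the symmetric group `S_p` (`p ≥ 2`) on a `ℚ`-vector space in which
the only vector fixed by the transposition `(0 1)` is zero is a multiple of the sign
representation. -/
theorem rep_with_no_transposition_invariants_is_sign
    (p : ℕ) (hp : 2 ≤ p) (W : Type*) [AddCommGroup W] [Module ℚ W]
    (ρ : Representation ℚ (Equiv.Perm (Fin p)) W)
    (h : ∀ w : W, ρ (Equiv.swap ⟨0, by omega⟩ ⟨1, by omega⟩) w = w → w = 0) :
    ∀ σ : Equiv.Perm (Fin p),
      ρ σ = ((Equiv.Perm.sign σ : ℤ) : ℚ) • (LinearMap.id : W →ₗ[ℚ] W) := by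
  set τ : Equiv.Perm (Fin p) := Equiv.swap ⟨0, by omega⟩ ⟨1, by omega⟩ with hτ
  have h01 : (⟨0, by omega⟩ : Fin p) ≠ ⟨1, by omega⟩ := by
    intro hcontra
    simpa using congrArg Fin.val hcontra
  -- ρ τ acts as -1
  have hτneg : ∀ w : W, ρ τ w = -w := by
    intro w
    have hinv : ρ τ (ρ τ w) = w := by
      have h1 : ρ (τ * τ) w = w := by
        rw [hτ, Equiv.swap_mul_self]; simp
      simpa [map_mul] using h1
    have hfix : ρ τ (w + ρ τ w) = w + ρ τ w := by
      rw [map_add, hinv]; abel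
    have := h _ hfix
    linear_combination (norm := module) this
  -- every transposition acts as -1
  have hswap : ∀ x y : Fin p, x ≠ y → ∀ w : W, ρ (Equiv.swap x y) w = -w := by
    intro x y hxy w
    obtain ⟨c, hc⟩ := isConj_iff.mp (Equiv.Perm.isConj_swap h01 hxy)
    have heq : ρ (Equiv.swap x y) w = ρ c (ρ τ (ρ c⁻¹ w)) := by
      rw [← hc]; simp [map_mul, hτ]
    have hcc : ρ c (ρ c⁻¹ w) = w := by
      rw [← Module.End.mul_apply, ← map_mul, mul_inv_cancel, map_one, Module.End.one_apply]
    rw [heq, hτneg, map_neg, hcc]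
  intro σ
  refine Equiv.Perm.swap_induction_on σ ?_ ?_
  · ext w; simp
  · intro f x y hxy ih
    ext w
    simp only [map_mul, Module.End.mul_apply, ih, LinearMap.smul_apply, LinearMap.id_apply,
      map_smul, hswap x y hxy, Equiv.Perm.sign_mul, Equiv.Perm.sign_swap hxy]
    push_cast
    module
end

section
/- Let k ≥ 2, let A be the Young diagram (3,2^{k-1},1) and B the Young diagram (4,2^{k-1}) (both of size 2k+2), and let T be any nonempty multiset contained in {A, B} (so T is {A}, {B}, or {A,B}). Then there is no multiset M of Young diagrams, each of size 2k+3, such that the multiset sum over μ ∈ M of the corner-removal multisets of μ equals T. (This is the 'easy combinatorial check with the branching formula' in the proof of Proposition 3.4: for k ≥ 2, neither V_{3,2^{k-1},1}, nor V_{4,2^{k-1}}, nor their sum is the restriction to S_{2k+2} of a representation of S_{2k+3}.) -/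
open Classical in
/-- The corner-removal multiset of a Young diagram `μ`: the multiset of Young diagrams
obtained from `μ` by deleting one removable corner, with one entry for each removable
corner of `μ`. -/
noncomputable def cornerRemovals (μ : YoungDiagram) : Multiset YoungDiagram :=
  (μ.cells.val.filter (fun c => ∃ ν : YoungDiagram, ν.cells = μ.cells.erase c)).map
    (fun c =>
      if h : ∃ ν : YoungDiagram, ν.cells = μ.cells.erase c then h.choose else ⊥)

open YoungDiagram

section Auxiliary

open Classical in
lemma mem_cornerRemovals_of {μ ν : YoungDiagram} {c : ℕ × ℕ} (hc : c ∈ μ.cells)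
    (hν : ν.cells = μ.cells.erase c) : ν ∈ cornerRemovals μ := by
  have hex : ∃ ν' : YoungDiagram, ν'.cells = μ.cells.erase c := ⟨ν, hν⟩
  have hch : hex.choose = ν := by
    apply YoungDiagram.ext
    rw [hex.choose_spec, hν]
  rw [cornerRemovals]
  refine Multiset.mem_map.mpr ⟨c, Multiset.mem_filter.mpr ⟨Finset.mem_val.mpr hc, hex⟩, ?_⟩
  rw [dif_pos hex, hch]

open Classical in
lemma cornerRemovals_spec {μ ν : YoungDiagram} (h : ν ∈ cornerRemovals μ) :
    ∃ c ∈ μ.cells, ν.cells = μ.cells.erase c := by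
  rw [cornerRemovals] at h
  obtain ⟨c, hc, hval⟩ := Multiset.mem_map.mp h
  obtain ⟨hc1, hc2⟩ := Multiset.mem_filter.mp hc
  refine ⟨c, Finset.mem_val.mp hc1, ?_⟩
  rw [← hval, dif_pos hc2]
  exact hc2.choose_spec

/-- The structure of a Young diagram `μ` from which removing the corner in row `r`
yields `ν`. -/
lemma structure_of_mem {μ ν : YoungDiagram} (h : ν ∈ cornerRemovals μ) :
    ∃ r : ℕ, (∀ i j : ℕ, (i, j) ∈ μ ↔ j < if i = r then ν.rowLen i + 1 else ν.rowLen i) ∧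
      (∀ r' < r, ν.rowLen r < ν.rowLen r') := by
  obtain ⟨⟨r, s⟩, hc, hcells⟩ := cornerRemovals_spec h
  have hmem : ∀ p : ℕ × ℕ, p ∈ μ ↔ (p = (r, s) ∨ p ∈ ν) := by
    intro p
    constructor
    · intro hp
      by_cases he : p = (r, s)
      · exact Or.inl he
      · exact Or.inr (by rw [← mem_cells, hcells]; exact Finset.mem_erase.mpr ⟨he, hp⟩)
    · rintro (rfl | hp)
      · exact hc
      · rw [← mem_cells, hcells] at hp
        exact (Finset.mem_erase.mp hp).2
  have hns : (r, s) ∉ ν := by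
    rw [← mem_cells, hcells]
    exact fun hcon => (Finset.mem_erase.mp hcon).1 rfl
  have h1 : ¬ s < ν.rowLen r := fun hcon => hns (mem_iff_lt_rowLen.mpr hcon)
  have h2 : ∀ j < s, j < ν.rowLen r := by
    intro j hj
    have : (r, j) ∈ μ := μ.up_left_mem le_rfl hj.le hc
    rcases (hmem _).mp this with he | hm
    · have : j = s := congrArg Prod.snd he
      omega
    · exact mem_iff_lt_rowLen.mp hm
  have hs : s = ν.rowLen r := by
    have h2' : s ≤ ν.rowLen r := by
      by_contra hcon
      exact absurd (h2 (ν.rowLen r) (lt_of_not_ge hcon)) (lt_irrefl _)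
    omega
  refine ⟨r, ?_, ?_⟩
  · intro i j
    rw [hmem (i, j), Prod.mk.injEq]
    by_cases hi : i = r
    · subst hi
      rw [if_pos rfl, mem_iff_lt_rowLen]
      omega
    · rw [if_neg hi, mem_iff_lt_rowLen]
      simp [hi]
  · intro r' hr'
    have : (r', s) ∈ μ := μ.up_left_mem hr'.le le_rfl hc
    rcases (hmem _).mp this with he | hm
    · exact absurd (congrArg Prod.fst he) (by simpa using hr'.ne)
    · rw [← hs]; exact mem_iff_lt_rowLen.mp hm

/-- A Young diagram built from an eventually-zero antitone row-length function. -/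
def ofFn (f : ℕ → ℕ) (hf : ∀ i, f (i + 1) ≤ f i) (N : ℕ) (hN : f N = 0) : YoungDiagram where
  cells := (Finset.range N ×ˢ Finset.range (f 0 + 1)).filter (fun p => p.2 < f p.1)
  isLowerSet := by
    have haf : Antitone f := antitone_nat_of_succ_le hf
    rintro ⟨i2, j2⟩ ⟨i1, j1⟩ ⟨(hi : i1 ≤ i2), (hj : j1 ≤ j2)⟩ hm
    simp only [Finset.coe_filter, Set.mem_setOf_eq, Finset.mem_product, Finset.mem_range] at hm ⊢
    have h2 : f i2 ≤ f i1 := haf hi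
    have h0 : f i1 ≤ f 0 := haf (Nat.zero_le _)
    exact ⟨⟨by omega, by omega⟩, by omega⟩

lemma mem_ofFn (f : ℕ → ℕ) (hf : ∀ i, f (i + 1) ≤ f i) (N : ℕ) (hN : f N = 0) (i j : ℕ) :
    (i, j) ∈ ofFn f hf N hN ↔ j < f i := by
  have haf : Antitone f := antitone_nat_of_succ_le hf
  constructor
  · intro h
    rw [← YoungDiagram.mem_cells] at h
    simp only [ofFn, Finset.mem_filter] at h
    exact h.2
  · intro h
    have hiN : i < N := by
      by_contra hcon
      have : f i ≤ f N := haf (le_of_not_gt hcon)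
      omega
    have h0 : f i ≤ f 0 := haf (Nat.zero_le _)
    rw [← YoungDiagram.mem_cells]
    simp only [ofFn, Finset.mem_filter, Finset.mem_product, Finset.mem_range]
    exact ⟨⟨hiN, by omega⟩, h⟩

lemma rowLen_ofFn (f : ℕ → ℕ) (hf : ∀ i, f (i + 1) ≤ f i) (N : ℕ) (hN : f N = 0) (i : ℕ) :
    (ofFn f hf N hN).rowLen i = f i := by
  refine le_antisymm ?_ ?_
  · by_contra hcon
    have := (mem_ofFn f hf N hN i (f i)).mp (mem_iff_lt_rowLen.mpr (lt_of_not_ge hcon))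
    omega
  · by_contra hcon
    have := mem_iff_lt_rowLen.mp ((mem_ofFn f hf N hN i _).mpr (lt_of_not_ge hcon))
    omega

/-- If `μ` has row lengths `f` and `f (r+1) < f r`, then the corner at the end of row `r`
is removable, and the removal has row lengths `f` decremented at `r`. -/
lemma remove_mem {μ : YoungDiagram} {f : ℕ → ℕ} (hμ : ∀ i j : ℕ, (i, j) ∈ μ ↔ j < f i)
    (hf : ∀ i, f (i + 1) ≤ f i) (N : ℕ) (hN : f N = 0) (r : ℕ) (hr : f (r + 1) < f r) :
    ∃ ν' ∈ cornerRemovals μ, ∀ i, ν'.rowLen i = if i = r then f r - 1 else f i := by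
  have haf : Antitone f := antitone_nat_of_succ_le hf
  set g : ℕ → ℕ := fun i => if i = r then f r - 1 else f i with hgdef
  have hg : ∀ i, g (i + 1) ≤ g i := by
    intro i
    by_cases e1 : i = r
    · subst e1
      have h1 : g (i + 1) = f (i + 1) := if_neg (by omega)
      have h2 : g i = f i - 1 := if_pos rfl
      omega
    · by_cases e2 : i + 1 = r
      · have h1 : g (i + 1) = f r - 1 := if_pos e2
        have h2 : g i = f i := if_neg e1
        have h3 : f r ≤ f i := by rw [← e2]; exact hf i
        omega
      · have h1 : g (i + 1) = f (i + 1) := if_neg e2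
        have h2 : g i = f i := if_neg e1
        rw [h1, h2]; exact hf i
  have hgN : g (N + r + 1) = 0 := by
    have h1 : g (N + r + 1) = f (N + r + 1) := if_neg (by omega)
    have h2 : f (N + r + 1) ≤ f N := haf (by omega)
    omega
  refine ⟨ofFn g hg (N + r + 1) hgN, mem_cornerRemovals_of (c := (r, f r - 1)) ?_ ?_, ?_⟩
  · rw [YoungDiagram.mem_cells, hμ]; omega
  · ext ⟨i, j⟩
    rw [Finset.mem_erase, YoungDiagram.mem_cells, YoungDiagram.mem_cells,
      mem_ofFn, hμ]
    simp only [ne_eq, Prod.mk.injEq, not_and, hgdef]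
    by_cases hi : i = r <;> simp [hi] <;> omega
  · exact rowLen_ofFn g hg _ hgN

lemma rowLen_eq_getD (μ : YoungDiagram) (i : ℕ) : μ.rowLen i = μ.rowLens.getD i 0 := by
  rcases lt_or_ge i μ.rowLens.length with h | h
  · rw [List.getD_eq_getElem _ _ h, get_rowLens]
  · rw [List.getD_eq_default _ _ h]
    rw [length_rowLens] at h
    by_contra hne
    have : (i, 0) ∈ μ := mem_iff_lt_rowLen.mpr (Nat.pos_of_ne_zero hne)
    rw [mem_iff_lt_colLen] at this; omega

lemma rowLen_A (k : ℕ) (hk : 2 ≤ k) (A : YoungDiagram)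
    (hA : A.rowLens = 3 :: (List.replicate (k - 1) 2 ++ [1])) (i : ℕ) :
    A.rowLen i = if i = 0 then 3 else if i < k then 2 else if i = k then 1 else 0 := by
  rw [rowLen_eq_getD, hA]
  rcases i with _ | i
  · simp
  · rw [List.getD_cons_succ]
    rcases lt_trichotomy i (k - 1) with h | h | h
    · rw [List.getD_append _ _ _ _ (by simpa using h),
        List.getD_eq_getElem _ _ (by simpa using h), List.getElem_replicate]
      split_ifs <;> first | exact ‹False›.elim | omega
    · rw [List.getD_append_right _ _ _ _ (by simp [h]), List.length_replicate, h, Nat.sub_self]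
      simp only [List.getD_cons_zero]
      split_ifs <;> first | exact ‹False›.elim | omega
    · rw [List.getD_append_right _ _ _ _ (by simp; omega), List.length_replicate]
      rw [List.getD_eq_default _ _ (by simp; omega)]
      split_ifs <;> first | exact ‹False›.elim | omega

lemma rowLen_B (k : ℕ) (hk : 2 ≤ k) (B : YoungDiagram)
    (hB : B.rowLens = 4 :: List.replicate (k - 1) 2) (i : ℕ) :
    B.rowLen i = if i = 0 then 4 else if i < k then 2 else 0 := by
  rw [rowLen_eq_getD, hB]
  rcases i with _ | i
  · simp
  · rw [List.getD_cons_succ]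
    rcases lt_or_ge i (k - 1) with h | h
    · rw [List.getD_eq_getElem _ _ (by simpa using h), List.getElem_replicate]
      split_ifs <;> first | exact ‹False›.elim | omega
    · rw [List.getD_eq_default _ _ (by simpa using h)]
      split_ifs <;> first | exact ‹False›.elim | omega

end Auxiliary

set_option maxHeartbeats 4000000 in
/-- For `k ≥ 2`, with `A = (3, 2^{k-1}, 1)` and `B = (4, 2^{k-1})` (partitions of
`2k + 2`), no nonempty submultiset `T` of `{A, B}` is the multiset sum of the
corner-removal multisets of a multiset of partitions of `2k + 3`: by the branching rule,
neither `V_A`, nor `V_B`, nor their sum is the restriction to `S_{2k+2}` of a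
representation of `S_{2k+3}`. -/
theorem no_branching_realization
    (k : ℕ) (hk : 2 ≤ k) (A B : YoungDiagram)
    (hA : A.rowLens = 3 :: (List.replicate (k - 1) 2 ++ [1]))
    (hB : B.rowLens = 4 :: List.replicate (k - 1) 2)
    (T : Multiset YoungDiagram) (hT : T ≠ 0) (hTAB : T ≤ ({A, B} : Multiset YoungDiagram)) :
    ¬ ∃ M : Multiset YoungDiagram,
        (∀ μ ∈ M, μ.card = 2 * k + 3) ∧ M.bind cornerRemovals = T := by
  rintro ⟨M, -, hMT⟩
  obtain ⟨t, ht⟩ := Multiset.exists_mem_of_ne_zero hT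
  have htAB : t = A ∨ t = B := by
    have h := Multiset.mem_of_le hTAB ht
    simpa using h
  have ht' := ht
  rw [← hMT] at ht'
  obtain ⟨μ, hμM, hμt⟩ := Multiset.mem_bind.mp ht'
  have hfin : ∀ ν' ∈ cornerRemovals μ, ν' = A ∨ ν' = B := by
    intro ν' hν'
    have hmemT : ν' ∈ T := by
      rw [← hMT]; exact Multiset.mem_bind.mpr ⟨μ, hμM, hν'⟩
    simpa using Multiset.mem_of_le hTAB hmemT
  obtain ⟨r, hmem, hlt⟩ := structure_of_mem hμt
  have hAr := rowLen_A k hk A hA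
  have hBr := rowLen_B k hk B hB
  rcases htAB with rfl | rfl
  · -- t = A
    simp only [hAr] at hmem hlt
    have hr4 : r = 0 ∨ r = 1 ∨ r = k ∨ r = k + 1 := by
      by_contra hcon
      push_neg at hcon
      by_cases hc1 : 2 ≤ r ∧ r < k
      · have h1 := hlt 1 (by omega)
        split_ifs at h1 <;> first | exact ‹False›.elim | omega
      · have h2 := hlt (k + 1) (by omega)
        split_ifs at h2 <;> first | exact ‹False›.elim | omega
    rcases hr4 with rfl | rfl | rfl | rfl
    · -- μ = (4, 2^{k-1}, 1); bad corner at row k-1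
      obtain ⟨ν', hm, hlen⟩ := remove_mem hmem
        (by intro i; split_ifs <;> first | exact ‹False›.elim | omega) (k + 2)
        (by split_ifs <;> first | exact ‹False›.elim | omega) (k - 1)
        (by split_ifs <;> first | exact ‹False›.elim | omega)
      rcases hfin ν' hm with rfl | rfl
      · have h0 := hlen 0
        rw [hAr] at h0
        split_ifs at h0 <;> first | exact ‹False›.elim | omega
      · have h0 := hlen k
        rw [hBr] at h0
        split_ifs at h0 <;> first | exact ‹False›.elim | omega
    · -- μ = (3, 3, 2^{k-2}, 1); bad corner at row k
      obtain ⟨ν', hm, hlen⟩ := remove_mem hmem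
        (by intro i; split_ifs <;> first | exact ‹False›.elim | omega) (k + 2)
        (by split_ifs <;> first | exact ‹False›.elim | omega) k
        (by split_ifs <;> first | exact ‹False›.elim | omega)
      rcases hfin ν' hm with rfl | rfl
      · have h0 := hlen 1
        rw [hAr] at h0
        split_ifs at h0 <;> first | exact ‹False›.elim | omega
      · have h0 := hlen 1
        rw [hBr] at h0
        split_ifs at h0 <;> first | exact ‹False›.elim | omega
    · -- μ = (3, 2^k); bad corner at row 0 (here k has been substituted by r)
      obtain ⟨ν', hm, hlen⟩ := remove_mem hmem
        (by intro i; split_ifs <;> first | exact ‹False›.elim | omega) (r + 2)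
        (by split_ifs <;> first | exact ‹False›.elim | omega) 0
        (by split_ifs <;> first | exact ‹False›.elim | omega)
      rcases hfin ν' hm with rfl | rfl
      · have h0 := hlen 0
        rw [hAr] at h0
        split_ifs at h0 <;> first | exact ‹False›.elim | omega
      · have h0 := hlen 0
        rw [hBr] at h0
        split_ifs at h0 <;> first | exact ‹False›.elim | omega
    · -- μ = (3, 2^{k-1}, 1, 1); bad corner at row 0
      obtain ⟨ν', hm, hlen⟩ := remove_mem hmem
        (by intro i; split_ifs <;> first | exact ‹False›.elim | omega) (k + 2)
        (by split_ifs <;> first | exact ‹False›.elim | omega) 0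
        (by split_ifs <;> first | exact ‹False›.elim | omega)
      rcases hfin ν' hm with rfl | rfl
      · have h0 := hlen 0
        rw [hAr] at h0
        split_ifs at h0 <;> first | exact ‹False›.elim | omega
      · have h0 := hlen 0
        rw [hBr] at h0
        split_ifs at h0 <;> first | exact ‹False›.elim | omega
  · -- t = B
    simp only [hBr] at hmem hlt
    have hr3 : r = 0 ∨ r = 1 ∨ r = k := by
      by_contra hcon
      push_neg at hcon
      by_cases hc1 : 2 ≤ r ∧ r < k
      · have h1 := hlt 1 (by omega)
        split_ifs at h1 <;> first | exact ‹False›.elim | omega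
      · have h2 := hlt k (by omega)
        split_ifs at h2 <;> first | exact ‹False›.elim | omega
    rcases hr3 with rfl | rfl | rfl
    · -- μ = (5, 2^{k-1}); bad corner at row k-1
      obtain ⟨ν', hm, hlen⟩ := remove_mem hmem
        (by intro i; split_ifs <;> first | exact ‹False›.elim | omega) (k + 2)
        (by split_ifs <;> first | exact ‹False›.elim | omega) (k - 1)
        (by split_ifs <;> first | exact ‹False›.elim | omega)
      rcases hfin ν' hm with rfl | rfl
      · have h0 := hlen 0
        rw [hAr] at h0
        split_ifs at h0 <;> first | exact ‹False›.elim | omega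
      · have h0 := hlen 0
        rw [hBr] at h0
        split_ifs at h0 <;> first | exact ‹False›.elim | omega
    · -- μ = (4, 3, 2^{k-2}); bad corner at row 0
      obtain ⟨ν', hm, hlen⟩ := remove_mem hmem
        (by intro i; split_ifs <;> first | exact ‹False›.elim | omega) (k + 2)
        (by split_ifs <;> first | exact ‹False›.elim | omega) 0
        (by split_ifs <;> first | exact ‹False›.elim | omega)
      rcases hfin ν' hm with rfl | rfl
      · have h0 := hlen 1
        rw [hAr] at h0
        split_ifs at h0 <;> first | exact ‹False›.elim | omega
      · have h0 := hlen 1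
        rw [hBr] at h0
        split_ifs at h0 <;> first | exact ‹False›.elim | omega
    · -- μ = (4, 2^{k-1}, 1); bad corner at row k-1 (here k has been substituted by r)
      obtain ⟨ν', hm, hlen⟩ := remove_mem hmem
        (by intro i; split_ifs <;> first | exact ‹False›.elim | omega) (r + 2)
        (by split_ifs <;> first | exact ‹False›.elim | omega) (r - 1)
        (by split_ifs <;> first | exact ‹False›.elim | omega)
      rcases hfin ν' hm with rfl | rfl
      · have h0 := hlen 0
        rw [hAr] at h0
        split_ifs at h0 <;> first | exact ‹False›.elim | omega
      · have h0 := hlen r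
        rw [hBr] at h0
        split_ifs at h0 <;> first | exact ‹False›.elim | omega
end

section
/- Let G be a topological additive commutative group and n : ℕ. The map Conf(G, n+1) → G × Conf°(G, n) sending x to (x 0, fun i => x (i.succ) − x 0) is a homeomorphism. (This makes precise the isomorphism F(E, n+1)/E ≅ F(E ∖ {0}, n) used in the paper: the configuration space of n+1 points on a group, modulo translation, is the configuration space of n points avoiding the origin.) -/
/-- The ordered configuration space of `m` points in a topological space `G`, with the
subspace topology from the product `Fin m → G`. -/
abbrev Conf (G : Type*) [TopologicalSpace G] (m : ℕ) : Type _ :=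
  {x : Fin m → G // Function.Injective x}

/-- The ordered configuration space of `m` points in a topological additive group `G`
avoiding the origin, with the subspace topology. -/
abbrev Conf0 (G : Type*) [TopologicalSpace G] [AddCommGroup G] (m : ℕ) : Type _ :=
  {y : Fin m → G // Function.Injective y ∧ ∀ i, y i ≠ 0}

/-- For a topological additive commutative group `G`, the map
`x ↦ (x 0, fun i => x i.succ - x 0)` is a homeomorphism
`Conf(G, n+1) ≃ G × Conf°(G, n)`. -/
theorem conf_succ_homeomorph_prod
    (G : Type*) [AddCommGroup G] [TopologicalSpace G] [IsTopologicalAddGroup G] (n : ℕ) :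
    ∃ h : Conf G (n + 1) ≃ₜ G × Conf0 G n,
      ∀ x : Conf G (n + 1),
        (h x).1 = x.1 0 ∧ ((h x).2 : Fin n → G) = fun i => x.1 i.succ - x.1 0 := by
  refine ⟨{
    toFun := fun x => ⟨x.1 0, ⟨fun i => x.1 i.succ - x.1 0, ?_, ?_⟩⟩
    invFun := fun p => ⟨Fin.cons p.1 (fun i => (p.2 : Fin n → G) i + p.1), ?_⟩
    left_inv := ?_
    right_inv := ?_
    continuous_toFun := ?_
    continuous_invFun := ?_ }, fun x => ⟨rfl, rfl⟩⟩
  · intro i j hij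
    simp only [sub_left_injective.eq_iff] at hij
    exact Fin.succ_injective n (x.2 hij)
  · intro i h
    exact (Fin.succ_ne_zero i) (x.2 (by simpa [sub_eq_zero] using h))
  · intro i j hij
    induction i using Fin.cases <;> induction j using Fin.cases <;>
      simp only [Fin.cons_zero, Fin.cons_succ] at hij
    · rfl
    · exact absurd hij.symm (by simpa [add_eq_right] using p.2.2.2 _)
    · exact absurd hij (by simpa [add_eq_right] using p.2.2.2 _)
    · exact congrArg Fin.succ (p.2.2.1 (add_right_cancel hij))
  · rintro ⟨x, hx⟩
    ext i
    induction i using Fin.cases <;> simp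
  · rintro ⟨a, y, hy⟩
    ext <;> simp
  · refine Continuous.prodMk ?_ (Continuous.subtype_mk ?_ _)
    · exact (continuous_apply 0).comp continuous_subtype_val
    · exact continuous_pi fun i => Continuous.sub
        ((continuous_apply i.succ).comp continuous_subtype_val)
        ((continuous_apply 0).comp continuous_subtype_val)
  · refine Continuous.subtype_mk (continuous_pi fun i => ?_) _
    induction i using Fin.cases with
    | zero => exact continuous_fst
    | succ i =>
      simp only [Fin.cons_succ]
      exact Continuous.add
        ((continuous_apply i).comp (continuous_subtype_val.comp continuous_snd))
        continuous_fst
end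

section
/- Let G be a topological additive commutative group and n : ℕ, and let G act on Conf(G, n+1) by translation: g +ᵥ x = fun i => g + x i. Then the orbit space of this action (the quotient of Conf(G, n+1) by the orbit equivalence relation, with the quotient topology) is homeomorphic to Conf°(G, n). (For G an elliptic curve E this is the isomorphism F(E, n+1)/E ≅ F(E ∖ {0}, n) used throughout the paper.) -/
/-- `G` acts on `Conf(G, m)` by translation: `g +ᵥ x = fun i => g + x i`. -/
instance confAddAction (G : Type*) [AddCommGroup G] [TopologicalSpace G] (m : ℕ) :
    AddAction G (Conf G m) where
  vadd g x := ⟨fun i => g + x.1 i, fun _ _ h => x.2 (add_left_cancel h)⟩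
  zero_vadd _ := Subtype.ext (funext fun _ => zero_add _)
  add_vadd a b x := Subtype.ext (funext fun i => add_assoc a b (x.1 i))

section aux

variable (G : Type*) [AddCommGroup G] [TopologicalSpace G] [IsTopologicalAddGroup G] (n : ℕ)

/-- Forward map `Conf(G, n+1) → Conf°(G, n)`. -/
def confFwd (x : Conf G (n + 1)) : Conf0 G n :=
  ⟨fun i => x.1 i.succ - x.1 0,
   ⟨fun i j h => by
      have : x.1 i.succ = x.1 j.succ := by
        have := sub_left_injective h
        simpa using this
      exact Fin.succ_injective n (x.2 this),
    fun i h => by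
      have : x.1 i.succ = x.1 0 := by
        have := sub_eq_zero.mp h
        simpa using this
      exact (Fin.succ_ne_zero i) (x.2 this)⟩⟩

/-- Backward map `Conf°(G, n) → Conf(G, n+1)`. -/
def confBwd (y : Conf0 G n) : Conf G (n + 1) :=
  ⟨Fin.cons 0 y.1, by
    intro i j h
    induction i using Fin.cases with
    | zero =>
      induction j using Fin.cases with
      | zero => rfl
      | succ j => simp at h; exact absurd h.symm (y.2.2 j)
    | succ i =>
      induction j using Fin.cases with
      | zero => simp at h; exact absurd h (y.2.2 i)
      | succ j => simp at h; exact congrArg Fin.succ (y.2.1 h)⟩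

lemma confFwd_continuous : Continuous (confFwd G n) := by
  apply Continuous.subtype_mk
  apply continuous_pi
  intro i
  exact ((continuous_apply i.succ).comp continuous_subtype_val).sub
    ((continuous_apply 0).comp continuous_subtype_val)

lemma confBwd_continuous : Continuous (confBwd G n) := by
  apply Continuous.subtype_mk
  apply continuous_pi
  intro i
  induction i using Fin.cases with
  | zero => simpa using continuous_const
  | succ i => simpa using (continuous_apply i).comp' continuous_subtype_val

lemma confFwd_const (a b : Conf G (n + 1))
    (h : (AddAction.orbitRel G (Conf G (n + 1))).r a b) : confFwd G n a = confFwd G n b := by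
  obtain ⟨g, hg⟩ := h
  subst hg
  ext i
  show (g + b.1 i.succ) - (g + b.1 0) = b.1 i.succ - b.1 0
  abel

lemma confFwd_confBwd (y : Conf0 G n) : confFwd G n (confBwd G n y) = y := by
  ext i
  simp [confFwd, confBwd]

lemma confBwd_confFwd (x : Conf G (n + 1)) :
    (AddAction.orbitRel G (Conf G (n + 1))).r (confBwd G n (confFwd G n x)) x := by
  refine ⟨-x.1 0, ?_⟩
  apply Subtype.ext
  funext i
  show -x.1 0 + x.1 i = (confBwd G n (confFwd G n x)).1 i
  induction i using Fin.cases with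
  | zero => simp [confBwd]
  | succ i => simp [confBwd, confFwd, sub_eq_neg_add]

end aux

/-- The orbit space of the translation action of `G` on `Conf(G, n+1)`, with the quotient
topology, is homeomorphic to `Conf°(G, n)`: for an elliptic curve `E` this is the
isomorphism `F(E, n+1)/E ≅ F(E ∖ {0}, n)`. -/
theorem conf_quotient_translation_homeomorph
    (G : Type*) [AddCommGroup G] [TopologicalSpace G] [IsTopologicalAddGroup G] (n : ℕ) :
    Nonempty
      (Quotient (AddAction.orbitRel G (Conf G (n + 1))) ≃ₜ Conf0 G n) := by
  refine ⟨{
    toFun := Quotient.lift (confFwd G n) (confFwd_const G n)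
    invFun := fun y => Quotient.mk _ (confBwd G n y)
    left_inv := by
      intro q
      induction q using Quotient.ind with
      | _ x => exact Quotient.sound (confBwd_confFwd G n x)
    right_inv := fun y => confFwd_confBwd G n y
    continuous_toFun := Continuous.quotient_lift (confFwd_continuous G n) _
    continuous_invFun := continuous_quotient_mk'.comp (confBwd_continuous G n)
  }⟩
end
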